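/- arXiv:2403.04016 — 11 statements merged into one kernel-verified Lean document; each statement's English description precedes it below -/
import Mathlib

section
/- Let D ∈ ℝ^{m×m} satisfy ‖D‖ < 1, where ‖D‖ is the operator norm induced by the Euclidean norm. Then for every v ∈ ℝ^m there exists a unique w ∈ ℝ^m such that w = Φ(v + D w). -/
open Matrix

/-- The rectified linear unit (ReLU) map, applied componentwise. -/
noncomputable def relu {m : ℕ} (q : Fin m → ℝ) : Fin m → ℝ := fun i => max (q i) 0

/-- The operator norm of a matrix induced by the Euclidean norm on `ℝ^m`. -/
noncomputable def opNorm {m : ℕ} (D : Matrix (Fin m) (Fin m) ℝ) : ℝ :=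
  ‖Matrix.toEuclideanCLM (𝕜 := ℝ) D‖

lemma relu_lipschitz {m : ℕ} (a b : Fin m → ℝ) :
    ‖((WithLp.equiv 2 (Fin m → ℝ)).symm (relu a - relu b) : EuclideanSpace ℝ (Fin m))‖ ≤
    ‖((WithLp.equiv 2 (Fin m → ℝ)).symm (a - b) : EuclideanSpace ℝ (Fin m))‖ := by
  rw [EuclideanSpace.norm_eq, EuclideanSpace.norm_eq]
  apply Real.sqrt_le_sqrt
  apply Finset.sum_le_sum
  intro i _
  have h : |relu a i - relu b i| ≤ |a i - b i| := abs_max_sub_max_le_abs (a i) (b i) 0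
  calc ‖(((WithLp.equiv 2 (Fin m → ℝ)).symm (relu a - relu b) : EuclideanSpace ℝ (Fin m))) i‖ ^ 2
      = |relu a i - relu b i| ^ 2 := by simp only [Real.norm_eq_abs]; rfl
    _ ≤ |a i - b i| ^ 2 := pow_le_pow_left₀ (abs_nonneg _) h 2
    _ = _ := by simp only [Real.norm_eq_abs]; rfl

/-- If `‖D‖ < 1` (operator norm induced by the Euclidean norm), then for every `v ∈ ℝ^m`
there exists a unique `w ∈ ℝ^m` such that `w = Φ(v + D w)`. -/
theorem existsUnique_relu_fixedPoint {m : ℕ} (D : Matrix (Fin m) (Fin m) ℝ)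
    (hD : opNorm D < 1) (v : Fin m → ℝ) :
    ∃! w : Fin m → ℝ, w = relu (v + D.mulVec w) := by
  set E := EuclideanSpace ℝ (Fin m)
  let e : (Fin m → ℝ) ≃ E := (WithLp.equiv 2 (Fin m → ℝ)).symm
  let f : E → E := fun w => e (relu (v + D.mulVec (e.symm w)))
  have hK0 : (0:ℝ) ≤ opNorm D := norm_nonneg _
  have hf : ContractingWith ⟨opNorm D, hK0⟩ f := by
    constructor
    · exact_mod_cast hD
    · apply LipschitzWith.of_dist_le_mul
      intro x y
      rw [dist_eq_norm, dist_eq_norm]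
      have h1 : f x - f y = e (relu (v + D.mulVec (e.symm x)) - relu (v + D.mulVec (e.symm y))) := rfl
      rw [h1]
      calc ‖(e (relu (v + D.mulVec (e.symm x)) - relu (v + D.mulVec (e.symm y))) : E)‖
          ≤ ‖(e ((v + D.mulVec (e.symm x)) - (v + D.mulVec (e.symm y))) : E)‖ :=
            relu_lipschitz _ _
        _ = ‖(toEuclideanCLM (𝕜 := ℝ) D) (x - y)‖ := by
            congr 1
            have : (v + D.mulVec (e.symm x)) - (v + D.mulVec (e.symm y))
                = D.mulVec (e.symm x - e.symm y) := by
              rw [Matrix.mulVec_sub]; abel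
            rw [this]
            rfl
        _ ≤ opNorm D * ‖x - y‖ := (toEuclideanCLM (𝕜 := ℝ) D).le_opNorm _
  haveI : Nonempty E := ⟨0⟩
  let w0 : E := ContractingWith.fixedPoint f hf
  have hw0 : f w0 = w0 := hf.fixedPoint_isFixedPt
  refine ⟨e.symm w0, ?_, ?_⟩
  · have := congrArg e.symm hw0
    simpa [f] using this.symm
  · intro y hy
    have hfy : f (e y) = e y := by
      show e (relu (v + D.mulVec (e.symm (e y)))) = e y
      rw [Equiv.symm_apply_apply]
      exact congrArg e hy.symm
    have := hf.fixedPoint_unique hfy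
    simp only [w0, ← this, Equiv.symm_apply_apply]
end

section
/- Let A ∈ ℝ^{n×n}, B ∈ ℝ^{n×m}, C ∈ ℝ^{m×n}, D ∈ ℝ^{m×m} with ‖D‖ < 1. The feedback system Σ is globally asymptotically stable if and only if it is locally asymptotically stable. -/
open Matrix Filter

/-- The Euclidean norm of a vector in `ℝ^n`. -/
noncomputable def enorm' {n : ℕ} (x : Fin n → ℝ) : ℝ :=
  ‖(WithLp.equiv 2 (Fin n → ℝ)).symm x‖

/-- A solution of the feedback system `Σ`. -/
def IsSolution {n m : ℕ} (A : Matrix (Fin n) (Fin n) ℝ) (B : Matrix (Fin n) (Fin m) ℝ)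
    (C : Matrix (Fin m) (Fin n) ℝ) (D : Matrix (Fin m) (Fin m) ℝ)
    (x : ℝ → Fin n → ℝ) : Prop :=
  ∃ w : ℝ → Fin m → ℝ, ∀ t ≥ (0:ℝ),
    w t = relu (C.mulVec (x t) + D.mulVec (w t)) ∧
    HasDerivAt x (A.mulVec (x t) + B.mulVec (w t)) t

/-- Condition (i): Lyapunov stability of the origin for `Σ`. -/
def LyapunovStable {n m : ℕ} (A : Matrix (Fin n) (Fin n) ℝ) (B : Matrix (Fin n) (Fin m) ℝ)
    (C : Matrix (Fin m) (Fin n) ℝ) (D : Matrix (Fin m) (Fin m) ℝ) : Prop :=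
  ∀ ε > (0:ℝ), ∃ δ > (0:ℝ), ∀ x : ℝ → Fin n → ℝ,
    IsSolution A B C D x → enorm' (x 0) < δ → ∀ t ≥ (0:ℝ), enorm' (x t) < ε

/-- Local asymptotic stability of the origin for `Σ`: conditions (i) and (ii). -/
def LocallyAsympStable {n m : ℕ} (A : Matrix (Fin n) (Fin n) ℝ) (B : Matrix (Fin n) (Fin m) ℝ)
    (C : Matrix (Fin m) (Fin n) ℝ) (D : Matrix (Fin m) (Fin m) ℝ) : Prop :=
  LyapunovStable A B C D ∧
    ∃ δ > (0:ℝ), ∀ x : ℝ → Fin n → ℝ,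
      IsSolution A B C D x → enorm' (x 0) < δ → Tendsto x atTop (nhds 0)

/-- Global asymptotic stability of the origin for `Σ`: conditions (i) and (iii). -/
def GloballyAsympStable {n m : ℕ} (A : Matrix (Fin n) (Fin n) ℝ) (B : Matrix (Fin n) (Fin m) ℝ)
    (C : Matrix (Fin m) (Fin n) ℝ) (D : Matrix (Fin m) (Fin m) ℝ) : Prop :=
  LyapunovStable A B C D ∧
    ∀ x : ℝ → Fin n → ℝ, IsSolution A B C D x → Tendsto x atTop (nhds 0)

lemma relu_smul {m : ℕ} (c : ℝ) (hc : 0 ≤ c) (q : Fin m → ℝ) :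
    relu (c • q) = c • relu q := by
  funext i
  simp only [relu, Pi.smul_apply, smul_eq_mul]
  rw [mul_max_of_nonneg _ _ hc, mul_zero]

lemma enorm'_smul {n : ℕ} (c : ℝ) (v : Fin n → ℝ) :
    enorm' (c • v) = |c| * enorm' v := by
  simp only [enorm', WithLp.equiv_symm_apply, WithLp.toLp_smul, norm_smul, Real.norm_eq_abs]

lemma isSolution_smul {n m : ℕ} {A : Matrix (Fin n) (Fin n) ℝ} {B : Matrix (Fin n) (Fin m) ℝ}
    {C : Matrix (Fin m) (Fin n) ℝ} {D : Matrix (Fin m) (Fin m) ℝ}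
    {x : ℝ → Fin n → ℝ} (c : ℝ) (hc : 0 ≤ c)
    (hx : IsSolution A B C D x) : IsSolution A B C D (fun t => c • x t) := by
  obtain ⟨w, hw⟩ := hx
  refine ⟨fun t => c • w t, fun t ht => ⟨?_, ?_⟩⟩
  · rw [Matrix.mulVec_smul, Matrix.mulVec_smul, ← smul_add, relu_smul c hc, ← (hw t ht).1]
  · have := ((hw t ht).2).const_smul c
    rw [Matrix.mulVec_smul, Matrix.mulVec_smul, ← smul_add]; exact this

/-- The feedback system `Σ` is globally asymptotically stable if and only if it is
locally asymptotically stable. -/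
theorem globallyAsympStable_iff_locallyAsympStable {n m : ℕ}
    (A : Matrix (Fin n) (Fin n) ℝ) (B : Matrix (Fin n) (Fin m) ℝ)
    (C : Matrix (Fin m) (Fin n) ℝ) (D : Matrix (Fin m) (Fin m) ℝ)
    (hD : opNorm D < 1) :
    GloballyAsympStable A B C D ↔ LocallyAsympStable A B C D := by
  constructor
  · rintro ⟨hLy, hG⟩
    exact ⟨hLy, 1, one_pos, fun x hx _ => hG x hx⟩
  · rintro ⟨hLy, δ, hδ, hL⟩
    refine ⟨hLy, fun x hx => ?_⟩
    set r : ℝ := enorm' (x 0) + 1 with hr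
    have hr0 : 0 < r := by
      have : (0:ℝ) ≤ enorm' (x 0) := norm_nonneg _
      linarith
    set c : ℝ := δ / (2 * r) with hc
    have hc0 : 0 < c := by positivity
    have hsol : IsSolution A B C D (fun t => c • x t) := isSolution_smul c hc0.le hx
    have hsmall : enorm' (c • x 0) < δ := by
      rw [enorm'_smul, abs_of_pos hc0]
      have h1 : enorm' (x 0) < r := by simp [hr]
      calc c * enorm' (x 0) < c * r := by exact mul_lt_mul_of_pos_left h1 hc0
        _ = δ / 2 := by rw [hc]; field_simp
        _ < δ := by linarith
    have htd : Tendsto (fun t => c • x t) atTop (nhds 0) := hL _ hsol hsmall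
    have := htd.const_smul c⁻¹
    simp only [smul_smul, inv_mul_cancel₀ hc0.ne', one_smul, smul_zero] at this
    exact this
end

section
/- With Φ the ReLU map on ℝ^m, one has the inclusions Π_NN ⊆ Π_COP ⊆ Π^*: every matrix of the form E^T (Q + 𝒥(J)) E with Q symmetric and entrywise nonnegative lies in Π_COP, and every matrix of the form E^T (Q + 𝒥(J)) E with Q copositive satisfies (ζ, Φ(ζ))^T Π (ζ, Φ(ζ)) ≥ 0 for all ζ ∈ ℝ^m. -/
open Matrix

/-- The block matrix `E = [[-I, I],[0, I]]`. -/
def Emat (m : ℕ) : Matrix (Fin m ⊕ Fin m) (Fin m ⊕ Fin m) ℝ :=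
  fromBlocks (-1) 1 0 1

/-- The block matrix `𝒥(J) = [[0, J],[J, 0]]`. -/
def calJ {m : ℕ} (J : Matrix (Fin m) (Fin m) ℝ) : Matrix (Fin m ⊕ Fin m) (Fin m ⊕ Fin m) ℝ :=
  fromBlocks 0 J J 0

/-- A symmetric matrix `Q` is copositive if `vᵀ Q v ≥ 0` for all entrywise nonnegative `v`. -/
def Copositive {k : Type*} [Fintype k] (Q : Matrix k k ℝ) : Prop :=
  ∀ v : k → ℝ, (∀ i, 0 ≤ v i) → 0 ≤ v ⬝ᵥ Q.mulVec v

/-- The multiplier class `Π_COP`. -/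
def PiCOP (m : ℕ) : Set (Matrix (Fin m ⊕ Fin m) (Fin m ⊕ Fin m) ℝ) :=
  {P | ∃ (Q : Matrix (Fin m ⊕ Fin m) (Fin m ⊕ Fin m) ℝ) (J : Matrix (Fin m) (Fin m) ℝ),
    J.IsDiag ∧ Q.IsSymm ∧ Copositive Q ∧ P = (Emat m)ᵀ * (Q + calJ J) * Emat m}

lemma diag_dot_zero {m : ℕ} {J : Matrix (Fin m) (Fin m) ℝ} (hJ : J.IsDiag)
    (a b : Fin m → ℝ) (hab : ∀ i, a i * b i = 0) : a ⬝ᵥ J.mulVec b = 0 := by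
  simp only [dotProduct, mulVec, Finset.mul_sum]
  apply Finset.sum_eq_zero
  intro i _
  apply Finset.sum_eq_zero
  intro j _
  by_cases h : i = j
  · subst h
    have h2 : a i * (J i i * b i) = J i i * (a i * b i) := by ring
    rw [h2, hab i, mul_zero]
  · rw [hJ h]; ring

/-- `Π_NN ⊆ Π_COP ⊆ Π^*`: every matrix `Eᵀ (Q + 𝒥(J)) E` with `Q` symmetric and
entrywise nonnegative lies in `Π_COP`, and every matrix `Eᵀ (Q + 𝒥(J)) E` with `Q`
symmetric copositive satisfies `(ζ, Φ(ζ))ᵀ Π (ζ, Φ(ζ)) ≥ 0` for all `ζ ∈ ℝ^m`. -/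
theorem piNN_subset_piCOP_subset_piStar {m : ℕ}
    (Q : Matrix (Fin m ⊕ Fin m) (Fin m ⊕ Fin m) ℝ) (J : Matrix (Fin m) (Fin m) ℝ)
    (hJ : J.IsDiag) (hQsymm : Q.IsSymm) :
    ((∀ i j, 0 ≤ Q i j) → (Emat m)ᵀ * (Q + calJ J) * Emat m ∈ PiCOP m) ∧
    (Copositive Q → ∀ ζ : Fin m → ℝ,
      0 ≤ (Sum.elim ζ (relu ζ)) ⬝ᵥ
        (((Emat m)ᵀ * (Q + calJ J) * Emat m).mulVec (Sum.elim ζ (relu ζ)))) := by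
  constructor
  · intro hQ
    refine ⟨Q, J, hJ, hQsymm, ?_, rfl⟩
    intro v hv
    simp only [dotProduct, mulVec]
    apply Finset.sum_nonneg
    intro i _
    apply mul_nonneg (hv i)
    apply Finset.sum_nonneg
    intro j _
    exact mul_nonneg (hQ i j) (hv j)
  · intro hQcop ζ
    set v : Fin m ⊕ Fin m → ℝ := Sum.elim ζ (relu ζ)
    set w : Fin m ⊕ Fin m → ℝ := (Emat m).mulVec v with hw
    have key : v ⬝ᵥ ((Emat m)ᵀ * (Q + calJ J) * Emat m).mulVec v
        = w ⬝ᵥ (Q + calJ J).mulVec w := by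
      rw [← mulVec_mulVec, ← mulVec_mulVec, dotProduct_mulVec, vecMul_transpose, hw]
    rw [key]
    have hwval : w = Sum.elim (fun i => relu ζ i - ζ i) (relu ζ) := by
      rw [hw]
      show (fromBlocks (-1) 1 0 1).mulVec (Sum.elim ζ (relu ζ)) = _
      rw [fromBlocks_mulVec]
      funext x
      cases x with
      | inl i => simp [neg_mulVec, sub_eq_neg_add]
      | inr i => simp
    rw [add_mulVec, dotProduct_add]
    have h1 : 0 ≤ w ⬝ᵥ Q.mulVec w := by
      apply hQcop
      intro i
      rw [hwval]
      cases i with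
      | inl i => simp [relu, sub_nonneg, le_max_left]
      | inr i => simp [relu, le_max_right]
    have h2 : w ⬝ᵥ (calJ J).mulVec w = 0 := by
      rw [hwval]
      show _ ⬝ᵥ (fromBlocks 0 J J 0).mulVec _ = 0
      rw [fromBlocks_mulVec]
      have hz : ∀ i, (relu ζ i - ζ i) * relu ζ i = 0 := by
        intro i
        unfold relu
        rcases le_or_gt (ζ i) 0 with h | h
        · simp [max_eq_right h]
        · simp [max_eq_left h.le]
      simp only [Sum.elim_inl, Sum.elim_inr, zero_mulVec, add_zero, zero_add,
        sumElim_dotProduct_sumElim, Sum.elim_comp_inl, Sum.elim_comp_inr]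
      rw [diag_dot_zero hJ _ _ hz]
      rw [diag_dot_zero hJ (relu ζ) (fun i => relu ζ i - ζ i) (fun i => by
        have h := hz i; nlinarith [hz i])]
      ring
    linarith
end

section
/- Let A ∈ ℝ^{n×n}, B ∈ ℝ^{n×m}, C ∈ ℝ^{m×n}, D ∈ ℝ^{m×m}. Suppose P ∈ S^n and Π ∈ Π^* are such that the symmetric matrix [[P A + A^T P, P B],[B^T P, 0]] + [[C, D],[0, I_m]]^T Π [[C, D],[0, I_m]] is negative definite. Then for every pair (x, w) ∈ ℝ^n × ℝ^m with (x, w) ≠ 0 and w = Φ(C x + D w), one has x^T (P A + A^T P) x + 2 x^T P B w < 0. -/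
open Matrix

/-- The multiplier class `Π^*`: symmetric matrices `Π` with
`(ζ, Φ(ζ))ᵀ Π (ζ, Φ(ζ)) ≥ 0` for all `ζ ∈ ℝ^m`. -/
def PiStar (m : ℕ) : Set (Matrix (Fin m ⊕ Fin m) (Fin m ⊕ Fin m) ℝ) :=
  {P | P.IsSymm ∧ ∀ ζ : Fin m → ℝ,
    0 ≤ (Sum.elim ζ (relu ζ)) ⬝ᵥ (P.mulVec (Sum.elim ζ (relu ζ)))}

/-- If `P ∈ S^n` and `Π ∈ Π^*` make
`[[PA + AᵀP, PB],[BᵀP, 0]] + [[C, D],[0, I]]ᵀ Π [[C, D],[0, I]]` negative definite,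
then for every `(x, w) ≠ 0` with `w = Φ(C x + D w)` one has
`xᵀ(PA + AᵀP)x + 2 xᵀ P B w < 0`. -/
theorem quadratic_negative_of_negdef_LMI {n m : ℕ}
    (A : Matrix (Fin n) (Fin n) ℝ) (B : Matrix (Fin n) (Fin m) ℝ)
    (C : Matrix (Fin m) (Fin n) ℝ) (D : Matrix (Fin m) (Fin m) ℝ)
    (P : Matrix (Fin n) (Fin n) ℝ) (hP : P.IsSymm)
    (Pi : Matrix (Fin m ⊕ Fin m) (Fin m ⊕ Fin m) ℝ) (hPi : Pi ∈ PiStar m)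
    (hLMI : (-(fromBlocks (P * A + Aᵀ * P) (P * B) (Bᵀ * P) 0 +
        (fromBlocks C D 0 (1 : Matrix (Fin m) (Fin m) ℝ))ᵀ * Pi *
          fromBlocks C D 0 (1 : Matrix (Fin m) (Fin m) ℝ))).PosDef)
    (x : Fin n → ℝ) (w : Fin m → ℝ) (hxw : Sum.elim x w ≠ 0)
    (hw : w = relu (C.mulVec x + D.mulVec w)) :
    x ⬝ᵥ ((P * A + Aᵀ * P).mulVec x) + 2 * (x ⬝ᵥ ((P * B).mulVec w)) < 0 := by
  set z : Fin n ⊕ Fin m → ℝ := Sum.elim x w with hz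
  set E := fromBlocks C D 0 (1 : Matrix (Fin m) (Fin m) ℝ) with hE
  have hpos := hLMI.dotProduct_mulVec_pos (x := z) hxw
  rw [neg_mulVec, dotProduct_neg, lt_neg, neg_zero, add_mulVec,
    dotProduct_add] at hpos
  -- second quadratic term is nonneg
  have key : E *ᵥ z = Sum.elim (C *ᵥ x + D *ᵥ w) w := by
    rw [hE, hz, fromBlocks_mulVec]
    simp
  have h2 : 0 ≤ z ⬝ᵥ ((Eᵀ * Pi * E) *ᵥ z) := by
    have : z ⬝ᵥ ((Eᵀ * Pi * E) *ᵥ z) =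
        (E *ᵥ z) ⬝ᵥ (Pi *ᵥ (E *ᵥ z)) := by
      rw [← mulVec_mulVec, ← mulVec_mulVec, dotProduct_mulVec z Eᵀ,
        vecMul_transpose]
    rw [this, key]
    have h := hPi.2 (C *ᵥ x + D *ᵥ w)
    rw [← hw] at h
    exact h
  -- first quadratic term
  have h1 : z ⬝ᵥ ((fromBlocks (P * A + Aᵀ * P) (P * B) (Bᵀ * P) 0) *ᵥ z) =
      x ⬝ᵥ ((P * A + Aᵀ * P).mulVec x) + 2 * (x ⬝ᵥ ((P * B).mulVec w)) := by
    rw [hz, fromBlocks_mulVec, sumElim_dotProduct_sumElim]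
    have hsymm : w ⬝ᵥ ((Bᵀ * P) *ᵥ x) = x ⬝ᵥ ((P * B) *ᵥ w) := by
      have hE2 : Bᵀ * P = (P * B)ᵀ := by rw [transpose_mul, hP.eq]
      rw [hE2, mulVec_transpose, dotProduct_comm, ← dotProduct_mulVec]
    simp [dotProduct_add, hsymm]
    ring
  simp only [star_trivial] at hpos
  linarith [h1, h2, hpos]
end

section
/- Let a, b ∈ ℝ^n with a ≠ 0. The matrix a b^T + b a^T is positive semidefinite if and only if there exists λ ≥ 0 such that b = λ a. -/
open Matrix

lemma vecMulVec_mulVec' {n : ℕ} (u v x : Fin n → ℝ) :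
    vecMulVec u v *ᵥ x = (v ⬝ᵥ x) • u := by
  funext i
  simp [mulVec, vecMulVec_apply, dotProduct, Finset.sum_mul, mul_comm, mul_left_comm]
  rw [Finset.mul_sum]

lemma quad_form {n : ℕ} (a b x : Fin n → ℝ) :
    x ⬝ᵥ ((vecMulVec a b + vecMulVec b a) *ᵥ x) = 2 * (a ⬝ᵥ x) * (b ⬝ᵥ x) := by
  rw [add_mulVec, vecMulVec_mulVec', vecMulVec_mulVec', dotProduct_add,
    dotProduct_smul, dotProduct_smul, dotProduct_comm x a, dotProduct_comm x b]
  simp [smul_eq_mul]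
  ring

/-- For `a, b ∈ ℝ^n` with `a ≠ 0`, the matrix `a bᵀ + b aᵀ` is positive semidefinite
if and only if there exists `λ ≥ 0` such that `b = λ a`. -/
theorem posSemidef_outer_sym_iff {n : ℕ} (a b : Fin n → ℝ) (ha : a ≠ 0) :
    (vecMulVec a b + vecMulVec b a).PosSemidef ↔ ∃ l : ℝ, 0 ≤ l ∧ b = l • a := by
  rw [posSemidef_iff_dotProduct_mulVec]
  constructor
  · rintro ⟨-, hq⟩
    have hq' : ∀ x : Fin n → ℝ, 0 ≤ 2 * (a ⬝ᵥ x) * (b ⬝ᵥ x) := by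
      intro x
      have := hq x
      rwa [star_trivial, quad_form] at this
    have hs0 : a ⬝ᵥ a ≠ 0 := fun h => ha (dotProduct_self_eq_zero.mp h)
    have hsn : 0 ≤ a ⬝ᵥ a := Finset.sum_nonneg fun i _ => mul_self_nonneg _
    have hs : 0 < a ⬝ᵥ a := lt_of_le_of_ne hsn (Ne.symm hs0)
    set s := a ⬝ᵥ a with hs_def
    set μ := (a ⬝ᵥ b) / s with hμ_def
    set c := b - μ • a with hc_def
    have hac : a ⬝ᵥ c = 0 := by
      rw [hc_def, dotProduct_sub, dotProduct_smul, smul_eq_mul, hμ_def]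
      field_simp
      rw [← hs_def]; ring
    have hbc : b ⬝ᵥ c = c ⬝ᵥ c := by
      have : c ⬝ᵥ c = b ⬝ᵥ c - μ * (a ⬝ᵥ c) := by
        rw [hc_def, sub_dotProduct, smul_dotProduct, smul_eq_mul]
      rw [this, hac]; ring
    by_cases hc : c = 0
    · refine ⟨μ, ?_, ?_⟩
      · have h := hq' a
        have hba : b ⬝ᵥ a = μ * s := by
          have : b = μ • a := by rwa [sub_eq_zero] at hc
          rw [this, smul_dotProduct, smul_eq_mul]
        rw [hba] at h
        nlinarith [mul_pos hs hs]
      · rwa [sub_eq_zero] at hc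
    · exfalso
      have hγn : 0 ≤ c ⬝ᵥ c := Finset.sum_nonneg fun i _ => mul_self_nonneg _
      have hγ : 0 < c ⬝ᵥ c :=
        lt_of_le_of_ne hγn (fun h => hc (dotProduct_self_eq_zero.mp h.symm))
      set γ := c ⬝ᵥ c with hγ_def
      set t := γ / (2 * (|μ| + 1)) with ht_def
      have habs : 0 ≤ |μ| := abs_nonneg μ
      have ht : 0 < t := by positivity
      have key2 : (|μ| + 1) * t = γ / 2 := by
        rw [ht_def]; field_simp
      have hμt : |μ| * t < γ / 2 := by nlinarith
      have hab : a ⬝ᵥ b = μ * s := by rw [hμ_def]; field_simp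
      have h := hq' ((-(t / s)) • a + c)
      have hax : a ⬝ᵥ ((-(t / s)) • a + c) = -t := by
        rw [dotProduct_add, dotProduct_smul, hac, smul_eq_mul, ← hs_def]
        field_simp
        ring
      have hbx : b ⬝ᵥ ((-(t / s)) • a + c) = -(μ * t) + γ := by
        rw [dotProduct_add, dotProduct_smul, hbc, smul_eq_mul, dotProduct_comm, hab]
        field_simp
      rw [hax, hbx] at h
      have hμt' : μ * t ≤ |μ| * t := mul_le_mul_of_nonneg_right (le_abs_self μ) ht.le
      nlinarith
  · rintro ⟨l, hl, rfl⟩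
    constructor
    · ext i j
      simp [conjTranspose_apply, vecMulVec_apply, Matrix.add_apply]
      ring
    · intro x
      rw [star_trivial, quad_form, smul_dotProduct, smul_eq_mul]
      nlinarith [sq_nonneg (a ⬝ᵥ x), mul_self_nonneg (a ⬝ᵥ x)]
end

section
/- Let D ∈ ℝ^{m×m} with ‖D‖ < 1, where ‖D‖ is the operator norm induced by the Euclidean norm. If w ∈ ℝ^m satisfies (w − D w) ⊙ w = 0, then w = 0. -/
open Matrix

/-- If `‖D‖ < 1` and `(w − D w) ⊙ w = 0` entrywise, then `w = 0`. -/
theorem eq_zero_of_hadamard_eq_zero {m : ℕ} (D : Matrix (Fin m) (Fin m) ℝ)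
    (hD : opNorm D < 1) (w : Fin m → ℝ)
    (hw : ∀ i, (w i - D.mulVec w i) * w i = 0) : w = 0 := by
  by_contra hne
  set v : EuclideanSpace ℝ (Fin m) := (WithLp.equiv _ _).symm w with hv
  have hv0 : v ≠ 0 := by
    exact fun h => hne (by simpa [hv] using congrArg (WithLp.equiv _ _).symm.symm h)
  have hDv : Matrix.toEuclideanCLM (𝕜 := ℝ) D v = (WithLp.equiv _ _).symm (D.mulVec w) := by
    rw [hv]; rfl
  have hip : (inner ℝ v v : ℝ) = inner ℝ (Matrix.toEuclideanCLM (𝕜 := ℝ) D v) v := by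
    rw [hDv, hv]
    simp only [PiLp.inner_apply, WithLp.equiv_symm_apply, PiLp.toLp_apply, RCLike.inner_apply, starRingEnd_apply, star_trivial]
    refine Finset.sum_congr rfl fun i _ => ?_
    have := hw i
    ring_nf
    ring_nf at this
    linarith
  have h1 : ‖v‖ ^ 2 = (inner ℝ (Matrix.toEuclideanCLM (𝕜 := ℝ) D v) v : ℝ) := by
    rw [← hip, real_inner_self_eq_norm_sq]
  have h2 : (inner ℝ (Matrix.toEuclideanCLM (𝕜 := ℝ) D v) v : ℝ) ≤ ‖Matrix.toEuclideanCLM (𝕜 := ℝ) D‖ * ‖v‖ * ‖v‖ := by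
    calc _ ≤ ‖Matrix.toEuclideanCLM (𝕜 := ℝ) D v‖ * ‖v‖ := real_inner_le_norm _ _
    _ ≤ ‖Matrix.toEuclideanCLM (𝕜 := ℝ) D‖ * ‖v‖ * ‖v‖ := by
        gcongr; exact (Matrix.toEuclideanCLM (𝕜 := ℝ) D).le_opNorm v
  have hvpos : 0 < ‖v‖ := norm_pos_iff.mpr hv0
  have hD' : ‖Matrix.toEuclideanCLM (𝕜 := ℝ) D‖ < 1 := hD
  nlinarith [h1, h2, hD', mul_pos hvpos hvpos, sq_nonneg ‖v‖]
end

section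
/- Let A ∈ ℝ^{n×n}, B ∈ ℝ^{n×m}, C ∈ ℝ^{m×n}, D ∈ ℝ^{m×m} with ‖D‖ < 1. Suppose H ∈ S^{n+m} is positive semidefinite, nonzero, of rank one, and satisfies the dual LMI constraints: writing H = [[H11, H12],[H12^T, H22]], the matrix A H11 + B H12^T + (A H11 + B H12^T)^T is positive semidefinite, the matrix [[-C, I_m − D],[0, I_m]] H [[-C, I_m − D],[0, I_m]]^T has all entries nonnegative, and every diagonal entry of −C H12 + (I_m − D) H22 is zero. Then there exist x ∈ ℝ^n, w ∈ ℝ^m and λ ∈ ℝ such that H = (x, w)(x, w)^T, w ≥ 0 entrywise, x ≠ 0, λ ≥ 0, A x + B w = λ x, and w = Φ(C x + D w). -/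
open Matrix

lemma mul_vecMulVec' {k l : Type*} [Fintype k] (M : Matrix l k ℝ) (a : k → ℝ) {r : Type*}
    (b : r → ℝ) : M * vecMulVec a b = vecMulVec (M *ᵥ a) b := by
  ext i j
  simp [Matrix.mul_apply, vecMulVec_apply, Matrix.mulVec, dotProduct, Finset.sum_mul,
    mul_assoc]

lemma vecMulVec_mul' {k l r : Type*} [Fintype k] (a : l → ℝ) (b : k → ℝ) (N : Matrix k r ℝ) :
    vecMulVec a b * N = vecMulVec a (b ᵥ* N) := by
  ext i j
  simp [Matrix.mul_apply, vecMulVec_apply, Matrix.vecMul, dotProduct, Finset.mul_sum,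
    mul_assoc]

lemma vecMulVec_mulVec'_s12 {k l : Type*} [Fintype k] (a : l → ℝ) (b : k → ℝ) (z : k → ℝ) :
    (vecMulVec a b) *ᵥ z = (b ⬝ᵥ z) • a := by
  ext i
  simp only [Matrix.mulVec, vecMulVec_apply, dotProduct, Finset.sum_mul, Pi.smul_apply,
    smul_eq_mul]
  exact Finset.sum_congr rfl fun k _ => by ring

lemma transpose_vecMulVec' {k l : Type*} (a : k → ℝ) (b : l → ℝ) :
    (vecMulVec a b)ᵀ = vecMulVec b a := by
  ext i j; simp [vecMulVec_apply, mul_comm]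

lemma psd_rank_one {k : Type*} [Fintype k] [DecidableEq k] (H : Matrix k k ℝ)
    (hPSD : H.PosSemidef) (hrank : H.rank = 1) :
    ∃ v : k → ℝ, H = vecMulVec v v := by
  rw [Matrix.rank] at hrank
  obtain ⟨v0, hv0, hv⟩ := finrank_eq_one_iff'.mp hrank
  set e : k → ℝ := (v0 : k → ℝ) with he
  have hecol : ∀ j, ∃ c : ℝ, ∀ i, H i j = c * e i := by
    intro j
    have hmem : (fun i => H i j) ∈ LinearMap.range H.mulVecLin := by
      refine ⟨Pi.single j 1, ?_⟩
      simp [Matrix.mulVecLin_apply, Matrix.col_apply']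
    obtain ⟨c, hc⟩ := hv ⟨_, hmem⟩
    exact ⟨c, fun i => by
      have := congrFun (congrArg (Subtype.val) hc) i
      simpa using this.symm⟩
  choose c hc using hecol
  have hene : e ≠ 0 := by
    simpa [he, Submodule.coe_eq_zero] using hv0
  obtain ⟨i0, hi0⟩ := Function.ne_iff.mp hene
  have hi0' : e i0 ≠ 0 := by simpa using hi0
  have hsym : ∀ i j, H i j = H j i := fun i j => by
    have := hPSD.isHermitian
    rw [Matrix.IsHermitian] at this
    have := congrFun (congrFun this j) i
    simpa using this
  set t : ℝ := c i0 / e i0 with ht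
  have hcj : ∀ j, c j = e j * t := by
    intro j
    have h1 : c j * e i0 = c i0 * e j := by
      rw [← hc j i0, hsym, hc i0 j]
    rw [ht]
    field_simp
    linear_combination h1
  have hH : ∀ i j, H i j = t * (e i * e j) := by
    intro i j
    rw [hc j i, hcj j]; ring
  have hdiag : 0 ≤ H i0 i0 := by
    have := hPSD.dotProduct_mulVec_nonneg (Pi.single i0 1)
    simpa [dotProduct, Pi.single_apply, Finset.sum_ite_eq] using this
  have ht0 : 0 ≤ t := by
    rw [hH i0 i0] at hdiag
    nlinarith [mul_self_pos.mpr hi0']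
  have htne : t ≠ 0 := by
    intro h0
    have hz : H = 0 := by
      ext i j; rw [hH i j, h0, Matrix.zero_apply]; ring
    rw [hz, Matrix.mulVecLin_zero, LinearMap.range_zero] at hrank
    simp at hrank
  have hsq : Real.sqrt t * Real.sqrt t = t := Real.mul_self_sqrt ht0
  refine ⟨fun i => Real.sqrt t * e i, ?_⟩
  ext i j
  rw [hH i j, vecMulVec_apply]
  linear_combination (e i * e j) * hsq.symm

lemma eigen_extract {n : ℕ} (x y : Fin n → ℝ) (hx : x ≠ 0)
    (hP : ∀ z, 0 ≤ (x ⬝ᵥ z) * (y ⬝ᵥ z)) :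
    ∃ l : ℝ, 0 ≤ l ∧ y = l • x := by
  set a : ℝ := x ⬝ᵥ x with hadef
  set b : ℝ := y ⬝ᵥ y with hbdef
  set c : ℝ := x ⬝ᵥ y with hcdef
  have hyx : y ⬝ᵥ x = c := by rw [hcdef, dotProduct_comm]
  have ha0 : 0 ≤ a := by
    rw [hadef]; exact Finset.sum_nonneg fun i _ => mul_self_nonneg (x i)
  have ha : 0 < a := by
    rcases ha0.lt_or_eq with h | h
    · exact h
    · exact absurd (dotProduct_self_eq_zero.mp h.symm) hx
  have hb0 : 0 ≤ b := by
    rw [hbdef]; exact Finset.sum_nonneg fun i _ => mul_self_nonneg (y i)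
  rcases hb0.eq_or_lt with hb | hb
  · refine ⟨0, le_refl _, ?_⟩
    rw [zero_smul]
    exact dotProduct_self_eq_zero.mp hb.symm
  have hc0 : 0 ≤ c := by
    have := hP x
    rw [← hadef, hyx] at this
    nlinarith
  have hcpos : 0 < c := by
    rcases hc0.eq_or_lt with h | h
    · exfalso
      have := hP (x - y)
      simp only [dotProduct_sub, ← hadef, ← hbdef, ← hcdef, hyx] at this
      nlinarith
    · exact h
  have hkey := hP ((2*b*c) • x - (a*b + c^2) • y)
  simp only [dotProduct_sub, dotProduct_smul, ← hadef, ← hbdef, ← hcdef, hyx,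
    smul_eq_mul] at hkey
  have h5 : (a*b - c^2)^2 ≤ 0 := by
    nlinarith [hkey, mul_pos hb hcpos, sq_nonneg (a*b - c^2)]
  have h7 : (a*b - c^2)^2 = 0 := le_antisymm h5 (sq_nonneg _)
  have hab : a*b = c^2 := by
    have := sq_eq_zero_iff.mp h7; linarith
  have hzero : (a • y - c • x) ⬝ᵥ (a • y - c • x) = 0 := by
    simp only [dotProduct_sub, sub_dotProduct, smul_dotProduct, dotProduct_smul,
      ← hadef, ← hbdef, ← hcdef, hyx, smul_eq_mul]
    linear_combination a * hab
  have hz := dotProduct_self_eq_zero.mp hzero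
  refine ⟨c / a, by positivity, ?_⟩
  have heq : a • y = c • x := sub_eq_zero.mp hz
  funext i
  have hi := congrFun heq i
  simp only [Pi.smul_apply, smul_eq_mul] at hi ⊢
  field_simp
  linear_combination hi

lemma key {n m : ℕ} (C : Matrix (Fin m) (Fin n) ℝ) (D : Matrix (Fin m) (Fin m) ℝ)
    (hD : opNorm D < 1) (x : Fin n → ℝ) (w : Fin m → ℝ) (y : Fin n → ℝ)
    (hw : ∀ i, 0 ≤ w i)
    (hu : ∀ i, 0 ≤ w i - (C *ᵥ x + D *ᵥ w) i)
    (huw : ∀ i, (w i - (C *ᵥ x + D *ᵥ w) i) * w i = 0)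
    (hw0 : x = 0 → w ≠ 0)
    (hP : ∀ z, 0 ≤ (x ⬝ᵥ z) * (y ⬝ᵥ z)) :
    x ≠ 0 ∧ (∃ l : ℝ, 0 ≤ l ∧ y = l • x) ∧ w = relu (C *ᵥ x + D *ᵥ w) := by
  set q : Fin m → ℝ := C *ᵥ x + D *ᵥ w with hq
  have hrelu : w = relu q := by
    funext i
    rcases (hw i).lt_or_eq with h | h
    · have hu0 : w i - q i = 0 := by
        have := huw i
        rcases mul_eq_zero.mp this with h' | h'
        · exact h'
        · exact absurd h'.symm h.ne
      have : q i = w i := by linarith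
      simp [relu, this]
      linarith
    · have : q i ≤ 0 := by have := hu i; linarith
      simp [relu, ← h, max_eq_right this]
  have hxne : x ≠ 0 := by
    intro hx
    have hwne := hw0 hx
    have hqD : q = D *ᵥ w := by rw [hq, hx]; simp
    set W : EuclideanSpace ℝ (Fin m) := (WithLp.equiv 2 _).symm w with hW
    set Q : EuclideanSpace ℝ (Fin m) := (WithLp.equiv 2 _).symm q with hQdef
    have hQ : Matrix.toEuclideanCLM (𝕜 := ℝ) D W = Q := by
      rw [hW, hQdef, hqD]
      rfl
    have hWnorm : ‖W‖ = Real.sqrt (∑ i, (w i)^2) := by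
      rw [EuclideanSpace.norm_eq]
      congr 1
      refine Finset.sum_congr rfl fun i _ => ?_
      rw [hW]
      simp [Real.norm_eq_abs, sq_abs]
    have hQnorm : ‖Q‖ = Real.sqrt (∑ i, (q i)^2) := by
      rw [EuclideanSpace.norm_eq]
      congr 1
      refine Finset.sum_congr rfl fun i _ => ?_
      rw [hQdef]
      simp [Real.norm_eq_abs, sq_abs]
    have hcomp : ∀ i, (w i)^2 ≤ (q i)^2 := by
      intro i
      have hwi := congrFun hrelu i
      rcases le_or_gt (q i) 0 with h | h
      · have : w i = 0 := by rw [hwi]; simp [relu, max_eq_right h]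
        rw [this]; nlinarith [sq_nonneg (q i)]
      · have : w i = q i := by rw [hwi]; simp [relu, max_eq_left h.le]
        rw [this]
    have hle : ‖W‖ ≤ ‖Q‖ := by
      rw [hWnorm, hQnorm]
      exact Real.sqrt_le_sqrt (Finset.sum_le_sum fun i _ => hcomp i)
    have hWpos : 0 < ‖W‖ := by
      rw [norm_pos_iff]
      intro h0
      apply hwne
      funext i
      have := congrArg (fun v : EuclideanSpace ℝ (Fin m) => v i) h0
      simpa [hW] using this
    have hQle : ‖Q‖ ≤ opNorm D * ‖W‖ := by
      rw [← hQ]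
      exact (Matrix.toEuclideanCLM (𝕜 := ℝ) D).le_opNorm W
    nlinarith
  exact ⟨hxne, eigen_extract x y hxne hP, hrelu⟩

/-- If a nonzero rank-one positive semidefinite `H` satisfies the dual LMI constraints,
then `H = (x, w)(x, w)ᵀ` with `w ≥ 0`, `x ≠ 0`, and there is `λ ≥ 0` with
`A x + B w = λ x` and `w = Φ(C x + D w)`. -/
theorem dual_rank_one_extraction {n m : ℕ}
    (A : Matrix (Fin n) (Fin n) ℝ) (B : Matrix (Fin n) (Fin m) ℝ)
    (C : Matrix (Fin m) (Fin n) ℝ) (D : Matrix (Fin m) (Fin m) ℝ)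
    (hD : opNorm D < 1)
    (H11 : Matrix (Fin n) (Fin n) ℝ) (H12 : Matrix (Fin n) (Fin m) ℝ)
    (H22 : Matrix (Fin m) (Fin m) ℝ)
    (hPSD : (fromBlocks H11 H12 H12ᵀ H22).PosSemidef)
    (hne : fromBlocks H11 H12 H12ᵀ H22 ≠ 0)
    (hrank : (fromBlocks H11 H12 H12ᵀ H22).rank = 1)
    (h1 : (A * H11 + B * H12ᵀ + (A * H11 + B * H12ᵀ)ᵀ).PosSemidef)
    (h2 : ∀ i j, 0 ≤ (fromBlocks (-C) (1 - D) 0 (1 : Matrix (Fin m) (Fin m) ℝ) *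
        fromBlocks H11 H12 H12ᵀ H22 *
        (fromBlocks (-C) (1 - D) 0 (1 : Matrix (Fin m) (Fin m) ℝ))ᵀ) i j)
    (h3 : ∀ i : Fin m, ((-C) * H12 + (1 - D) * H22 : Matrix (Fin m) (Fin m) ℝ) i i = 0) :
    ∃ (x : Fin n → ℝ) (w : Fin m → ℝ) (l : ℝ),
      fromBlocks H11 H12 H12ᵀ H22 = vecMulVec (Sum.elim x w) (Sum.elim x w) ∧
      (∀ i, 0 ≤ w i) ∧ x ≠ 0 ∧ 0 ≤ l ∧
      A.mulVec x + B.mulVec w = l • x ∧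
      w = relu (C.mulVec x + D.mulVec w) := by
  obtain ⟨v, hH⟩ := psd_rank_one _ hPSD hrank
  set x0 : Fin n → ℝ := fun i => v (Sum.inl i) with hx0
  set w0 : Fin m → ℝ := fun i => v (Sum.inr i) with hw0'
  have hv : v = Sum.elim x0 w0 := by funext p; cases p <;> rfl
  rw [hv] at hH
  -- block identities
  have hB11 : H11 = vecMulVec x0 x0 := by
    ext i j
    have := congrFun (congrFun hH (Sum.inl i)) (Sum.inl j)
    simpa [Matrix.fromBlocks, vecMulVec_apply] using this
  have hB12 : H12 = vecMulVec x0 w0 := by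
    ext i j
    have := congrFun (congrFun hH (Sum.inl i)) (Sum.inr j)
    simpa [Matrix.fromBlocks, vecMulVec_apply] using this
  have hB22 : H22 = vecMulVec w0 w0 := by
    ext i j
    have := congrFun (congrFun hH (Sum.inr i)) (Sum.inr j)
    simpa [Matrix.fromBlocks, vecMulVec_apply] using this
  have hB12T : H12ᵀ = vecMulVec w0 x0 := by
    rw [hB12, transpose_vecMulVec']
  -- the vector u
  set u0 : Fin m → ℝ := fun i => w0 i - (C *ᵥ x0 + D *ᵥ w0) i with hu0def
  have hMv : (fromBlocks (-C) (1 - D) 0 (1 : Matrix (Fin m) (Fin m) ℝ)) *ᵥ (Sum.elim x0 w0)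
      = Sum.elim u0 w0 := by
    funext p
    rw [fromBlocks_mulVec]
    cases p with
    | inl i =>
      simp only [Sum.elim_inl, Sum.elim_comp_inl, Sum.elim_comp_inr, Pi.add_apply,
        Matrix.neg_mulVec, Matrix.sub_mulVec, Matrix.one_mulVec, Pi.neg_apply, Pi.sub_apply,
        hu0def]
      ring
    | inr i =>
      simp [Sum.elim_comp_inl, Sum.elim_comp_inr, Matrix.zero_mulVec, Matrix.one_mulVec]
  -- sign information from h2
  have hs : ∀ p q, 0 ≤ Sum.elim u0 w0 p * Sum.elim u0 w0 q := by
    intro p q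
    have h2' := h2 p q
    have hrw : fromBlocks (-C) (1 - D) 0 (1 : Matrix (Fin m) (Fin m) ℝ) *
        fromBlocks H11 H12 H12ᵀ H22 *
        (fromBlocks (-C) (1 - D) 0 (1 : Matrix (Fin m) (Fin m) ℝ))ᵀ
        = vecMulVec (Sum.elim u0 w0) (Sum.elim u0 w0) := by
      rw [hH, mul_vecMulVec', vecMulVec_mul', vecMul_transpose, hMv]
    rw [hrw, vecMulVec_apply] at h2'
    exact h2'
  -- complementarity from h3
  have huw : ∀ i, u0 i * w0 i = 0 := by
    intro i
    have h3' := h3 i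
    rw [hB12, hB22, mul_vecMulVec', mul_vecMulVec'] at h3'
    simp only [Matrix.add_apply, vecMulVec_apply] at h3'
    have hsplit : u0 i = ((-C) *ᵥ x0) i + ((1 - D) *ᵥ w0) i := by
      simp only [hu0def, Matrix.neg_mulVec, Matrix.sub_mulVec, Matrix.one_mulVec,
        Pi.neg_apply, Pi.sub_apply, Pi.add_apply]
      ring
    rw [hsplit]
    linear_combination h3'
  -- quadratic form from h1
  set y0 : Fin n → ℝ := A *ᵥ x0 + B *ᵥ w0 with hy0def
  have hy : ∀ z, 0 ≤ (x0 ⬝ᵥ z) * (y0 ⬝ᵥ z) := by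
    intro z
    have hmat : A * H11 + B * H12ᵀ + (A * H11 + B * H12ᵀ)ᵀ
        = vecMulVec y0 x0 + vecMulVec x0 y0 := by
      rw [hB11, hB12T, mul_vecMulVec', mul_vecMulVec']
      ext i j
      simp only [Matrix.add_apply, Matrix.transpose_apply, vecMulVec_apply, hy0def,
        Pi.add_apply]
      ring
    have hqf := h1.dotProduct_mulVec_nonneg z
    rw [hmat] at hqf
    rw [Matrix.add_mulVec, vecMulVec_mulVec'_s12, vecMulVec_mulVec'_s12] at hqf
    simp only [dotProduct_add, dotProduct_smul, smul_eq_mul, star_trivial] at hqf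
    have hc1 : x0 ⬝ᵥ z = z ⬝ᵥ x0 := dotProduct_comm _ _
    have hc2 : y0 ⬝ᵥ z = z ⬝ᵥ y0 := dotProduct_comm _ _
    rw [hc1, hc2] at hqf ⊢
    nlinarith [hqf]
  -- nondegeneracy
  have hne' : ¬(x0 = 0 ∧ w0 = 0) := by
    rintro ⟨hx, hw⟩
    apply hne
    rw [hH, hx, hw]
    ext p q
    cases p <;> cases q <;> simp [vecMulVec_apply]
  by_cases hsgn : ∀ p, 0 ≤ Sum.elim u0 w0 p
  · obtain ⟨hxne, ⟨l, hl, hyl⟩, hrel⟩ :=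
      key C D hD x0 w0 y0 (fun i => hsgn (Sum.inr i)) (fun i => hsgn (Sum.inl i))
        (fun i => huw i) (fun hx hw => hne' ⟨hx, hw⟩) hy
    exact ⟨x0, w0, l, hH, fun i => hsgn (Sum.inr i), hxne, hl, hyl, hrel⟩
  · push_neg at hsgn
    obtain ⟨p0, hp0⟩ := hsgn
    have hneg : ∀ p, Sum.elim u0 w0 p ≤ 0 := by
      intro p
      nlinarith [hs p0 p]
    have hnu : ∀ i, u0 i ≤ 0 := fun i => hneg (Sum.inl i)
    have hnw : ∀ i, w0 i ≤ 0 := fun i => hneg (Sum.inr i)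
    obtain ⟨hxne, ⟨l, hl, hyl⟩, hrel⟩ :=
      key C D hD (-x0) (-w0) (-y0)
        (fun i => by simp only [Pi.neg_apply]; linarith [hnw i])
        (fun i => by
          simp only [Matrix.mulVec_neg, Pi.neg_apply, Pi.add_apply]
          have := hnu i
          simp only [hu0def, Pi.add_apply] at this
          linarith)
        (fun i => by
          simp only [Matrix.mulVec_neg, Pi.neg_apply, Pi.add_apply]
          have := huw i
          simp only [hu0def, Pi.add_apply] at this
          linear_combination this)
        (fun hx hw => hne' ⟨neg_eq_zero.mp hx, neg_eq_zero.mp hw⟩)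
        (fun z => by
          have := hy z
          simpa [neg_dotProduct, neg_mul_neg] using this)
    refine ⟨-x0, -w0, l, ?_, fun i => neg_nonneg.mpr (hnw i), hxne, hl, ?_, hrel⟩
    · rw [hH]
      ext p q
      cases p <;> cases q <;> simp [vecMulVec_apply]
    · have : A *ᵥ (-x0) + B *ᵥ (-w0) = -y0 := by
        simp only [Matrix.mulVec_neg, hy0def, neg_add_rev]
        abel
      rw [this, hyl]
end

section
/- Let A ∈ ℝ^{n×n}, B ∈ ℝ^{n×m}, C ∈ ℝ^{m×n}, D ∈ ℝ^{m×m} with ‖D‖ < 1. Suppose x ∈ ℝ^n, w ∈ ℝ^m and λ ≥ 0 satisfy A x + B w = λ x and w = Φ(C x + D w). Then the function t ↦ e^{λ t} x is a solution of the feedback system Σ (with associated input t ↦ e^{λ t} w). In particular, ‖e^{λ t} x‖ ≥ ‖x‖ for all t ≥ 0, so if x ≠ 0 then this solution does not converge to 0 and Σ is not globally asymptotically stable. -/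
open Matrix Filter

/-- If `A x + B w = λ x` and `w = Φ(C x + D w)` with `λ ≥ 0`, then `t ↦ e^{λ t} x` is a
solution of `Σ` with associated input `t ↦ e^{λ t} w`; in particular
`‖e^{λ t} x‖ ≥ ‖x‖` for all `t ≥ 0`, so if `x ≠ 0` then `Σ` is not globally
asymptotically stable. -/
theorem exp_ray_is_unstable_solution {n m : ℕ}
    (A : Matrix (Fin n) (Fin n) ℝ) (B : Matrix (Fin n) (Fin m) ℝ)
    (C : Matrix (Fin m) (Fin n) ℝ) (D : Matrix (Fin m) (Fin m) ℝ)
    (hD : opNorm D < 1)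
    (x : Fin n → ℝ) (w : Fin m → ℝ) (l : ℝ) (hl : 0 ≤ l)
    (heig : A.mulVec x + B.mulVec w = l • x)
    (hw : w = relu (C.mulVec x + D.mulVec w)) :
    (∀ t ≥ (0:ℝ),
        Real.exp (l * t) • w =
          relu (C.mulVec (Real.exp (l * t) • x) + D.mulVec (Real.exp (l * t) • w)) ∧
        HasDerivAt (fun s : ℝ => Real.exp (l * s) • x)
          (A.mulVec (Real.exp (l * t) • x) + B.mulVec (Real.exp (l * t) • w)) t) ∧
    IsSolution A B C D (fun s : ℝ => Real.exp (l * s) • x) ∧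
    (∀ t ≥ (0:ℝ), enorm' x ≤ enorm' (Real.exp (l * t) • x)) ∧
    (x ≠ 0 → ¬ Tendsto (fun s : ℝ => Real.exp (l * s) • x) atTop (nhds 0)) ∧
    (x ≠ 0 → ¬ GloballyAsympStable A B C D) := by
  have hkey : ∀ t : ℝ,
      Real.exp (l * t) • w =
        relu (C.mulVec (Real.exp (l * t) • x) + D.mulVec (Real.exp (l * t) • w)) ∧
      HasDerivAt (fun s : ℝ => Real.exp (l * s) • x)
        (A.mulVec (Real.exp (l * t) • x) + B.mulVec (Real.exp (l * t) • w)) t := by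
    intro t
    set c := Real.exp (l * t) with hc
    have hcpos : 0 < c := Real.exp_pos _
    constructor
    · rw [Matrix.mulVec_smul, Matrix.mulVec_smul, ← smul_add]
      funext i
      simp only [relu, Pi.smul_apply, smul_eq_mul]
      rw [congrFun hw i]
      simp only [relu]
      rw [mul_max_of_nonneg _ _ hcpos.le, mul_zero]
    · have h1 : HasDerivAt (fun s : ℝ => Real.exp (l * s)) (l * c) t := by
        simpa [hc, mul_comm, Function.comp_def] using
          (Real.hasDerivAt_exp (l * t)).comp t ((hasDerivAt_id t).const_mul l)
      have h2 : HasDerivAt (fun s : ℝ => Real.exp (l * s) • x) ((l * c) • x) t :=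
        h1.smul_const x
      have heq : A.mulVec (c • x) + B.mulVec (c • w) = (l * c) • x := by
        rw [Matrix.mulVec_smul, Matrix.mulVec_smul, ← smul_add, heig, smul_smul,
          mul_comm]
      rw [heq]; exact h2
  have hsol : IsSolution A B C D (fun s : ℝ => Real.exp (l * s) • x) :=
    ⟨fun s => Real.exp (l * s) • w, fun t _ => hkey t⟩
  have hnorm : ∀ t ≥ (0:ℝ), enorm' x ≤ enorm' (Real.exp (l * t) • x) := by
    intro t ht
    have h1 : (1:ℝ) ≤ Real.exp (l * t) := Real.one_le_exp (mul_nonneg hl ht)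
    have : enorm' (Real.exp (l * t) • x) = Real.exp (l * t) * enorm' x := by
      simp only [enorm']
      rw [show (WithLp.equiv 2 (Fin n → ℝ)).symm (Real.exp (l * t) • x)
          = Real.exp (l * t) • (WithLp.equiv 2 (Fin n → ℝ)).symm x from rfl,
        norm_smul, Real.norm_eq_abs, abs_of_pos (Real.exp_pos _)]
    rw [this]
    nlinarith [norm_nonneg ((WithLp.equiv 2 (Fin n → ℝ)).symm x),
      show (0:ℝ) ≤ enorm' x from norm_nonneg _]
  have hnot : x ≠ 0 → ¬ Tendsto (fun s : ℝ => Real.exp (l * s) • x) atTop (nhds 0) := by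
    intro hx htend
    obtain ⟨i, hi⟩ : ∃ i, x i ≠ 0 := by
      by_contra h
      push_neg at h
      exact hx (funext h)
    have hcoord : Tendsto (fun s : ℝ => Real.exp (l * s) * x i) atTop (nhds 0) := by
      have := htend.comp (tendsto_id (α := ℝ))
      have h := (continuous_apply i).continuousAt.tendsto.comp htend
      simpa [Function.comp_def] using h
    have hev : ∀ᶠ s : ℝ in atTop, |Real.exp (l * s) * x i| < |x i| := by
      have : Tendsto (fun s : ℝ => |Real.exp (l * s) * x i|) atTop (nhds 0) := by
        simpa using hcoord.abs
      exact this.eventually_lt_const (abs_pos.mpr hi)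
    obtain ⟨s, hs0, hs⟩ := (hev.and (eventually_ge_atTop (0:ℝ))).exists
    have h1 : (1:ℝ) ≤ Real.exp (l * s) := Real.one_le_exp (mul_nonneg hl hs)
    rw [abs_mul, Real.abs_exp] at hs0
    nlinarith [abs_pos.mpr hi, hs0]
  refine ⟨fun t _ => hkey t, hsol, hnorm, hnot, fun hx hgas => hnot hx (hgas.2 _ hsol)⟩
end

section
/- Let A ∈ ℝ^{n×n}, B ∈ ℝ^{n×m}, C ∈ ℝ^{m×n}, D ∈ ℝ^{m×m} with ‖D‖ < 1, let x ∈ ℝ^n and λ ≥ 0, and suppose the function t ↦ e^{λ t} x is a solution of the feedback system Σ, with associated function w : [0,∞) → ℝ^m. Then w := w(0) satisfies A x + B w = λ x, w − (C x + D w) ≥ 0 entrywise, w ≥ 0 entrywise, and (w − (C x + D w)) ⊙ w = 0. -/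
open Matrix

/-- If `t ↦ e^{λ t} x` is a solution of the feedback system `Σ` with associated function
`w : [0,∞) → ℝ^m`, then `w := w(0)` satisfies `A x + B w = λ x`,
`w − (C x + D w) ≥ 0` entrywise, `w ≥ 0` entrywise, and `(w − (C x + D w)) ⊙ w = 0`. -/
theorem algebraic_conditions_of_exp_solution {n m : ℕ}
    (A : Matrix (Fin n) (Fin n) ℝ) (B : Matrix (Fin n) (Fin m) ℝ)
    (C : Matrix (Fin m) (Fin n) ℝ) (D : Matrix (Fin m) (Fin m) ℝ)
    (hD : opNorm D < 1)
    (x : Fin n → ℝ) (l : ℝ) (hl : 0 ≤ l)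
    (w : ℝ → Fin m → ℝ)
    (hsol : ∀ t ≥ (0:ℝ),
      w t = relu (C.mulVec (Real.exp (l * t) • x) + D.mulVec (w t)) ∧
      HasDerivAt (fun s : ℝ => Real.exp (l * s) • x)
        (A.mulVec (Real.exp (l * t) • x) + B.mulVec (w t)) t) :
    A.mulVec x + B.mulVec (w 0) = l • x ∧
    (∀ i, 0 ≤ w 0 i - (C.mulVec x + D.mulVec (w 0)) i) ∧
    (∀ i, 0 ≤ w 0 i) ∧
    (∀ i, (w 0 i - (C.mulVec x + D.mulVec (w 0)) i) * w 0 i = 0) := by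
  obtain ⟨hfix, hderiv⟩ := hsol 0 le_rfl
  have he : Real.exp (l * 0) = 1 := by simp
  rw [he, one_smul] at hfix hderiv
  have h0 : HasDerivAt (fun s : ℝ => l * s) l 0 := by
    simpa using (hasDerivAt_id 0).const_mul l
  have h1 : HasDerivAt (fun s : ℝ => Real.exp (l * s)) (Real.exp (l * 0) * l) 0 :=
    (Real.hasDerivAt_exp (l * 0)).comp 0 h0
  have h2 : HasDerivAt (fun s : ℝ => Real.exp (l * s) • x) (l • x) 0 := by
    have := h1.smul_const x
    simpa using this
  have hAB : A.mulVec x + B.mulVec (w 0) = l • x := hderiv.unique h2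
  refine ⟨hAB, ?_, ?_, ?_⟩
  · intro i
    have := congrFun hfix i
    simp only [relu] at this
    rw [this]
    have : C.mulVec x i + D.mulVec (w 0) i ≤ max (C.mulVec x i + D.mulVec (w 0) i) 0 :=
      le_max_left _ _
    simp only [Pi.add_apply]
    linarith
  · intro i
    have := congrFun hfix i
    simp only [relu, Pi.add_apply] at this
    rw [this]; exact le_max_right _ _
  · intro i
    have h := congrFun hfix i
    simp only [relu, Pi.add_apply] at h
    rw [h]
    rcases le_or_gt (C.mulVec x i + D.mulVec (w 0) i) 0 with hc | hc
    · simp [max_eq_right hc]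
    · simp [max_eq_left hc.le, Pi.add_apply]
end

section
/- Let A ∈ ℝ^{n×n}, B ∈ ℝ^{n×m}, C ∈ ℝ^{m×n}, D ∈ ℝ^{m×m} with ‖D‖ < 1. If there exist a positive definite P ∈ S^n and Π ∈ Π_NN such that [[P A + A^T P, P B],[B^T P, 0]] + [[C, D],[0, I_m]]^T Π [[C, D],[0, I_m]] is negative definite, then the feedback system Σ is globally asymptotically stable. -/
open Matrix Filter

/-- The multiplier class `Π_NN`. -/
def PiNN (m : ℕ) : Set (Matrix (Fin m ⊕ Fin m) (Fin m ⊕ Fin m) ℝ) :=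
  {P | ∃ (Q : Matrix (Fin m ⊕ Fin m) (Fin m ⊕ Fin m) ℝ) (J : Matrix (Fin m) (Fin m) ℝ),
    J.IsDiag ∧ Q.IsSymm ∧ (∀ i j, 0 ≤ Q i j) ∧ P = (Emat m)ᵀ * (Q + calJ J) * Emat m}

/- ### Auxiliary lemmas -/

lemma quad_upper {ι : Type*} [Fintype ι] (M : Matrix ι ι ℝ) (v : ι → ℝ) :
    v ⬝ᵥ M.mulVec v ≤ (∑ i, ∑ j, |M i j|) * ∑ k, v k ^ 2 := by
  have hterm : ∀ i j : ι, v i * (M i j * v j) ≤ |M i j| * ∑ k, v k ^ 2 := by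
    intro i j
    calc v i * (M i j * v j) ≤ |v i * (M i j * v j)| := le_abs_self _
    _ = |M i j| * |v i * v j| := by rw [abs_mul, abs_mul, abs_mul]; ring
    _ ≤ |M i j| * ∑ k, v k ^ 2 := by
        refine mul_le_mul_of_nonneg_left ?_ (abs_nonneg _)
        have h1 : |v i * v j| ≤ (v i ^ 2 + v j ^ 2) / 2 := by
          rw [abs_mul]
          nlinarith [abs_nonneg (v i), abs_nonneg (v j), sq_abs (v i), sq_abs (v j),
            sq_nonneg (|v i| - |v j|)]
        have h2 : v i ^ 2 ≤ ∑ k, v k ^ 2 :=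
          Finset.single_le_sum (fun k _ => sq_nonneg (v k)) (Finset.mem_univ i)
        have h3 : v j ^ 2 ≤ ∑ k, v k ^ 2 :=
          Finset.single_le_sum (fun k _ => sq_nonneg (v k)) (Finset.mem_univ j)
        linarith
  calc v ⬝ᵥ M.mulVec v = ∑ i, ∑ j, v i * (M i j * v j) := by
        simp [dotProduct, mulVec, Finset.mul_sum]
  _ ≤ ∑ i, ∑ j, |M i j| * ∑ k, v k ^ 2 :=
      Finset.sum_le_sum fun i _ => Finset.sum_le_sum fun j _ => hterm i j
  _ = (∑ i, ∑ j, |M i j|) * ∑ k, v k ^ 2 := by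
      rw [Finset.sum_mul]; congr 1; ext i; rw [Finset.sum_mul]

lemma quad_smul {ι : Type*} [Fintype ι] (M : Matrix ι ι ℝ) (c : ℝ) (v : ι → ℝ) :
    (c • v) ⬝ᵥ M.mulVec (c • v) = c ^ 2 * (v ⬝ᵥ M.mulVec v) := by
  rw [Matrix.mulVec_smul, smul_dotProduct, dotProduct_smul]
  simp [smul_eq_mul]; ring

lemma quad_lower {ι : Type*} [Fintype ι] [DecidableEq ι] (M : Matrix ι ι ℝ) (hM : M.PosDef) :
    ∃ ε > (0:ℝ), ∀ v : ι → ℝ, ε * (∑ k, v k ^ 2) ≤ v ⬝ᵥ M.mulVec v := by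
  cases isEmpty_or_nonempty ι with
  | inl h =>
    refine ⟨1, one_pos, fun v => ?_⟩
    simp [dotProduct]
  | inr h =>
    set f : (ι → ℝ) → ℝ := fun v => v ⬝ᵥ M.mulVec v with hf
    have hfc : Continuous f := by
      apply continuous_finset_sum
      intro i _
      exact (continuous_apply i).mul (continuous_finset_sum _ fun j _ =>
        (continuous_const.mul (continuous_apply j)))
    set K : Set (ι → ℝ) := {v | ∑ k, v k ^ 2 = 1} with hK
    have hScont : Continuous fun v : ι → ℝ => ∑ k, v k ^ 2 :=
      continuous_finset_sum _ fun k _ => (continuous_apply k).pow 2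
    have hKclosed : IsClosed K := isClosed_eq hScont continuous_const
    have hKsub : K ⊆ Metric.closedBall 0 1 := by
      intro v hv
      rw [Metric.mem_closedBall, dist_zero_right]
      rw [pi_norm_le_iff_of_nonneg zero_le_one]
      intro i
      rw [Real.norm_eq_abs, abs_le_one_iff_mul_self_le_one, ← sq]
      rw [← hv]
      exact Finset.single_le_sum (fun k _ => sq_nonneg (v k)) (Finset.mem_univ i)
    have hKcompact : IsCompact K :=
      (isCompact_closedBall (0 : ι → ℝ) 1).of_isClosed_subset hKclosed hKsub
    obtain ⟨i0⟩ := h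
    have hKne : K.Nonempty := by
      refine ⟨Pi.single i0 1, ?_⟩
      simp [hK, Pi.single_apply]
    obtain ⟨v0, hv0K, hmin⟩ := hKcompact.exists_isMinOn hKne hfc.continuousOn
    have hv0ne : v0 ≠ 0 := by
      intro h0
      rw [h0] at hv0K
      simp [hK] at hv0K
    refine ⟨f v0, hM.dotProduct_mulVec_pos hv0ne, fun v => ?_⟩
    by_cases hv : ∑ k, v k ^ 2 = 0
    · have hvz : v = 0 := by
        funext k
        have := (Finset.sum_eq_zero_iff_of_nonneg (fun k _ => sq_nonneg (v k))).mp hv k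
          (Finset.mem_univ k)
        exact pow_eq_zero_iff two_ne_zero |>.mp this
      simp [hvz, hv, dotProduct]
    · have hSpos : 0 < ∑ k, v k ^ 2 :=
        lt_of_le_of_ne (Finset.sum_nonneg fun k _ => sq_nonneg (v k)) (Ne.symm hv)
      set r : ℝ := Real.sqrt (∑ k, v k ^ 2) with hr
      have hrpos : 0 < r := Real.sqrt_pos.mpr hSpos
      have hr2 : r ^ 2 = ∑ k, v k ^ 2 := Real.sq_sqrt hSpos.le
      have huK : r⁻¹ • v ∈ K := by
        simp only [hK, Set.mem_setOf_eq, Pi.smul_apply, smul_eq_mul]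
        have : ∀ k, (r⁻¹ * v k) ^ 2 = r⁻¹ ^ 2 * v k ^ 2 := fun k => by ring
        simp_rw [this, ← Finset.mul_sum, ← hr2]
        field_simp
      have hfu : f (r⁻¹ • v) = r⁻¹ ^ 2 * f v := quad_smul M r⁻¹ v
      have hle : f v0 ≤ r⁻¹ ^ 2 * f v := by rw [← hfu]; exact hmin huK
      have h1 : f v0 * r ^ 2 ≤ r⁻¹ ^ 2 * f v * r ^ 2 :=
        mul_le_mul_of_nonneg_right hle (sq_nonneg r)
      have h2 : r⁻¹ ^ 2 * f v * r ^ 2 = f v := by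
        field_simp
      rw [h2, hr2] at h1
      exact h1

lemma conj_quad {k l : Type*} [Fintype k] [Fintype l] (G : Matrix k l ℝ) (N : Matrix k k ℝ)
    (v : l → ℝ) :
    v ⬝ᵥ (Gᵀ * N * G).mulVec v = (G.mulVec v) ⬝ᵥ N.mulVec (G.mulVec v) := by
  rw [← Matrix.mulVec_mulVec, ← Matrix.mulVec_mulVec, dotProduct_mulVec, vecMul_transpose]

lemma quad_fromBlocks {k l : Type*} [Fintype k] [Fintype l]
    (M₁ : Matrix k k ℝ) (M₂ : Matrix k l ℝ) (M₃ : Matrix l k ℝ) (M₄ : Matrix l l ℝ)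
    (x : k → ℝ) (w : l → ℝ) :
    (Sum.elim x w) ⬝ᵥ (fromBlocks M₁ M₂ M₃ M₄).mulVec (Sum.elim x w)
      = x ⬝ᵥ M₁.mulVec x + x ⬝ᵥ M₂.mulVec w + (w ⬝ᵥ M₃.mulVec x + w ⬝ᵥ M₄.mulVec w) := by
  rw [fromBlocks_mulVec]
  simp only [Sum.elim_comp_inl, Sum.elim_comp_inr]
  rw [sumElim_dotProduct_sumElim, dotProduct_add, dotProduct_add]

lemma diag_mulVec {m : ℕ} {J : Matrix (Fin m) (Fin m) ℝ} (hJ : J.IsDiag) (u : Fin m → ℝ)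
    (i : Fin m) : (J *ᵥ u) i = J i i * u i := by
  simp only [mulVec, dotProduct]
  exact Finset.sum_eq_single i (fun j _ hj => by rw [hJ hj.symm, zero_mul]) (by simp)

lemma multiplier_nonneg {m : ℕ} (Pi : Matrix (Fin m ⊕ Fin m) (Fin m ⊕ Fin m) ℝ)
    (hPi : Pi ∈ PiNN m) (q : Fin m → ℝ) :
    0 ≤ (Sum.elim q (relu q)) ⬝ᵥ Pi.mulVec (Sum.elim q (relu q)) := by
  obtain ⟨Q, J, hJ, hQs, hQnn, rfl⟩ := hPi
  rw [conj_quad]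
  set w : Fin m → ℝ := relu q with hw
  have hE : (Emat m).mulVec (Sum.elim q w) = Sum.elim (w - q) w := by
    rw [Emat, fromBlocks_mulVec]
    simp only [Sum.elim_comp_inl, Sum.elim_comp_inr, Matrix.neg_mulVec, Matrix.one_mulVec,
      Matrix.zero_mulVec, zero_add]
    congr 1
    rw [neg_add_eq_sub]
  rw [hE, Matrix.add_mulVec, dotProduct_add]
  have hwnn : ∀ i, 0 ≤ w i := fun i => le_max_right _ _
  have hsnn : ∀ i, 0 ≤ (w - q) i := fun i => by
    simp only [Pi.sub_apply, hw, relu]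
    exact sub_nonneg.mpr (le_max_left _ _)
  have hcomp : ∀ i, (w - q) i * w i = 0 := by
    intro i
    simp only [Pi.sub_apply, hw, relu]
    rcases le_or_gt 0 (q i) with h | h
    · rw [max_eq_left h]; ring
    · rw [max_eq_right h.le]; ring
  have hvnn : ∀ i : Fin m ⊕ Fin m, 0 ≤ Sum.elim (w - q) w i := by
    rintro (i | i)
    · exact hsnn i
    · exact hwnn i
  have hQ : 0 ≤ Sum.elim (w - q) w ⬝ᵥ Q.mulVec (Sum.elim (w - q) w) := by
    simp only [dotProduct, mulVec]
    refine Finset.sum_nonneg fun i _ => mul_nonneg (hvnn i) ?_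
    exact Finset.sum_nonneg fun j _ => mul_nonneg (hQnn i j) (hvnn j)
  have hJ0 : Sum.elim (w - q) w ⬝ᵥ (calJ J).mulVec (Sum.elim (w - q) w) = 0 := by
    rw [calJ, quad_fromBlocks]
    have h1 : (w - q) ⬝ᵥ J.mulVec w = 0 := by
      simp only [dotProduct]
      refine Finset.sum_eq_zero fun i _ => ?_
      rw [diag_mulVec hJ]
      calc (w - q) i * (J i i * w i) = J i i * ((w - q) i * w i) := by ring
      _ = 0 := by rw [hcomp i, mul_zero]
    have h2 : w ⬝ᵥ J.mulVec (w - q) = 0 := by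
      simp only [dotProduct]
      refine Finset.sum_eq_zero fun i _ => ?_
      rw [diag_mulVec hJ]
      calc w i * (J i i * (w - q) i) = J i i * ((w - q) i * w i) := by ring
      _ = 0 := by rw [hcomp i, mul_zero]
    simp [h1, h2]
  linarith [hQ, hJ0.ge]

lemma hasDerivAt_quadForm {n : ℕ} (P : Matrix (Fin n) (Fin n) ℝ) (x : ℝ → Fin n → ℝ)
    (v : Fin n → ℝ) (t : ℝ) (hx : HasDerivAt x v t) :
    HasDerivAt (fun s => x s ⬝ᵥ P.mulVec (x s))
      (v ⬝ᵥ P.mulVec (x t) + x t ⬝ᵥ P.mulVec v) t := by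
  have hxi : ∀ i, HasDerivAt (fun s => x s i) (v i) t := hasDerivAt_pi.mp hx
  have h1 : ∀ i, HasDerivAt (fun s => ∑ j, P i j * x s j) (∑ j, P i j * v j) t := fun i =>
    HasDerivAt.fun_sum fun j _ => (hxi j).const_mul (P i j)
  have h2 : HasDerivAt (fun s => ∑ i, x s i * ∑ j, P i j * x s j)
      (∑ i, (v i * ∑ j, P i j * x t j + x t i * ∑ j, P i j * v j)) t :=
    HasDerivAt.fun_sum fun i _ => (hxi i).mul (h1 i)
  have e1 : (fun s => x s ⬝ᵥ P.mulVec (x s)) = fun s => ∑ i, x s i * ∑ j, P i j * x s j := by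
    funext s; simp [dotProduct, mulVec]
  rw [e1]
  convert h2 using 1
  simp [dotProduct, mulVec, Finset.sum_add_distrib]

lemma dyn_eq {n m : ℕ} (A : Matrix (Fin n) (Fin n) ℝ) (B : Matrix (Fin n) (Fin m) ℝ)
    (P : Matrix (Fin n) (Fin n) ℝ) (x : Fin n → ℝ) (w : Fin m → ℝ) :
    (A.mulVec x + B.mulVec w) ⬝ᵥ P.mulVec x + x ⬝ᵥ P.mulVec (A.mulVec x + B.mulVec w)
      = (Sum.elim x w) ⬝ᵥ
        (fromBlocks (P * A + Aᵀ * P) (P * B) (Bᵀ * P) (0 : Matrix (Fin m) (Fin m) ℝ)).mulVec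
          (Sum.elim x w) := by
  rw [quad_fromBlocks]
  have e1 : x ⬝ᵥ (Aᵀ * P).mulVec x = (A.mulVec x) ⬝ᵥ P.mulVec x := by
    rw [← Matrix.mulVec_mulVec, dotProduct_mulVec, vecMul_transpose]
  have e2 : x ⬝ᵥ (P * A).mulVec x = x ⬝ᵥ P.mulVec (A.mulVec x) := by
    rw [← Matrix.mulVec_mulVec]
  have e3 : x ⬝ᵥ (P * B).mulVec w = x ⬝ᵥ P.mulVec (B.mulVec w) := by
    rw [← Matrix.mulVec_mulVec]
  have e4 : w ⬝ᵥ (Bᵀ * P).mulVec x = (B.mulVec w) ⬝ᵥ P.mulVec x := by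
    rw [← Matrix.mulVec_mulVec, dotProduct_mulVec, vecMul_transpose]
  rw [Matrix.add_mulVec, dotProduct_add, add_dotProduct, Matrix.mulVec_add, dotProduct_add,
    e1, e2, e3, e4, Matrix.zero_mulVec, dotProduct_zero]
  ring

lemma enorm'_eq {n : ℕ} (y : Fin n → ℝ) : enorm' y = Real.sqrt (∑ i, y i ^ 2) := by
  rw [enorm', EuclideanSpace.norm_eq]
  congr 1
  refine Finset.sum_congr rfl fun i _ => ?_
  simp [WithLp.equiv_symm_apply, Real.norm_eq_abs, sq_abs]

/-- If the primal LMI is feasible with a positive definite `P` and some `Π ∈ Π_NN`, then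
the feedback system `Σ` is globally asymptotically stable. -/
theorem primal_LMI_implies_stability {n m : ℕ}
    (A : Matrix (Fin n) (Fin n) ℝ) (B : Matrix (Fin n) (Fin m) ℝ)
    (C : Matrix (Fin m) (Fin n) ℝ) (D : Matrix (Fin m) (Fin m) ℝ)
    (hD : opNorm D < 1)
    (P : Matrix (Fin n) (Fin n) ℝ) (hP : P.PosDef)
    (Pi : Matrix (Fin m ⊕ Fin m) (Fin m ⊕ Fin m) ℝ) (hPi : Pi ∈ PiNN m)
    (hLMI : (-(fromBlocks (P * A + Aᵀ * P) (P * B) (Bᵀ * P) 0 +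
        (fromBlocks C D 0 (1 : Matrix (Fin m) (Fin m) ℝ))ᵀ * Pi *
          fromBlocks C D 0 (1 : Matrix (Fin m) (Fin m) ℝ))).PosDef) :
    GloballyAsympStable A B C D := by
  obtain ⟨ε, hε, hlow⟩ := quad_lower _ hLMI
  obtain ⟨c₁, hc₁, hPlow⟩ := quad_lower P hP
  set c₂ : ℝ := (∑ i, ∑ j, |P i j|) + 1 with hc₂def
  have hc₂ : 0 < c₂ := by
    have : 0 ≤ ∑ i, ∑ j, |P i j| :=
      Finset.sum_nonneg fun i _ => Finset.sum_nonneg fun j _ => abs_nonneg _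
    linarith
  have hPup : ∀ v : Fin n → ℝ, v ⬝ᵥ P.mulVec v ≤ c₂ * ∑ k, v k ^ 2 := by
    intro v
    have h1 := quad_upper P v
    have h2 : (0:ℝ) ≤ ∑ k, v k ^ 2 := Finset.sum_nonneg fun k _ => sq_nonneg _
    nlinarith
  set α : ℝ := ε / c₂ with hαdef
  have hα : 0 < α := div_pos hε hc₂
  set G : Matrix (Fin m ⊕ Fin m) (Fin n ⊕ Fin m) ℝ :=
    fromBlocks C D 0 (1 : Matrix (Fin m) (Fin m) ℝ) with hGdef
  set N : Matrix (Fin n ⊕ Fin m) (Fin n ⊕ Fin m) ℝ :=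
    fromBlocks (P * A + Aᵀ * P) (P * B) (Bᵀ * P) 0 with hNdef
  set M : Matrix (Fin n ⊕ Fin m) (Fin n ⊕ Fin m) ℝ := -(N + Gᵀ * Pi * G) with hMdef
  -- key exponential bound
  have key : ∀ x : ℝ → Fin n → ℝ, IsSolution A B C D x → ∀ t : ℝ, 0 ≤ t →
      x t ⬝ᵥ P.mulVec (x t) ≤ (x 0 ⬝ᵥ P.mulVec (x 0)) * Real.exp (-(α * t)) := by
    intro x hsol t ht
    obtain ⟨w, hw⟩ := hsol
    set V : ℝ → ℝ := fun s => x s ⬝ᵥ P.mulVec (x s) with hVdef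
    set dV : ℝ → ℝ := fun s =>
      (A.mulVec (x s) + B.mulVec (w s)) ⬝ᵥ P.mulVec (x s)
        + x s ⬝ᵥ P.mulVec (A.mulVec (x s) + B.mulVec (w s)) with hdVdef
    have hderiv : ∀ s : ℝ, 0 ≤ s → HasDerivAt V (dV s) s := fun s hs =>
      hasDerivAt_quadForm P x _ s (hw s hs).2
    have hbound : ∀ s : ℝ, 0 ≤ s → dV s ≤ -(α * V s) := by
      intro s hs
      obtain ⟨hws, _⟩ := hw s hs
      set ξ : Fin n ⊕ Fin m → ℝ := Sum.elim (x s) (w s) with hξdef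
      have hid : dV s = ξ ⬝ᵥ N.mulVec ξ := dyn_eq A B P (x s) (w s)
      have hNsplit : N = -M - Gᵀ * Pi * G := by
        rw [hMdef, neg_neg, add_sub_cancel_right]
      have hmul : 0 ≤ ξ ⬝ᵥ (Gᵀ * Pi * G).mulVec ξ := by
        rw [conj_quad]
        have hGξ : G.mulVec ξ = Sum.elim (C.mulVec (x s) + D.mulVec (w s)) (w s) := by
          rw [hGdef, hξdef, fromBlocks_mulVec]
          simp only [Sum.elim_comp_inl, Sum.elim_comp_inr, Matrix.zero_mulVec,
            Matrix.one_mulVec, zero_add]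
        rw [hGξ]
        have hmn := multiplier_nonneg Pi hPi (C.mulVec (x s) + D.mulVec (w s))
        rw [← hws] at hmn
        exact hmn
      have hMξ : ε * ∑ k, ξ k ^ 2 ≤ ξ ⬝ᵥ M.mulVec ξ := hlow ξ
      have hSξ : ∑ k : Fin n, x s k ^ 2 ≤ ∑ k, ξ k ^ 2 := by
        rw [Fintype.sum_sum_type]
        have : (0:ℝ) ≤ ∑ k : Fin m, ξ (Sum.inr k) ^ 2 :=
          Finset.sum_nonneg fun k _ => sq_nonneg _
        simp only [hξdef, Sum.elim_inl]
        linarith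
      have hVup : V s ≤ c₂ * ∑ k : Fin n, x s k ^ 2 := hPup (x s)
      have hsplit : ξ ⬝ᵥ N.mulVec ξ
          = -(ξ ⬝ᵥ M.mulVec ξ) - ξ ⬝ᵥ (Gᵀ * Pi * G).mulVec ξ := by
        rw [hNsplit, Matrix.sub_mulVec, dotProduct_sub, Matrix.neg_mulVec, dotProduct_neg]
      have hαc₂ : α * c₂ = ε := div_mul_cancel₀ ε hc₂.ne'
      have hSnn : (0:ℝ) ≤ ∑ k : Fin n, x s k ^ 2 :=
        Finset.sum_nonneg fun k _ => sq_nonneg _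
      have step1 : dV s ≤ -(ε * ∑ k : Fin n, x s k ^ 2) := by
        rw [hid, hsplit]
        have : ε * ∑ k : Fin n, x s k ^ 2 ≤ ε * ∑ k, ξ k ^ 2 :=
          mul_le_mul_of_nonneg_left hSξ hε.le
        linarith
      have step2 : α * V s ≤ ε * ∑ k : Fin n, x s k ^ 2 := by
        calc α * V s ≤ α * (c₂ * ∑ k : Fin n, x s k ^ 2) :=
              mul_le_mul_of_nonneg_left hVup hα.le
        _ = ε * ∑ k : Fin n, x s k ^ 2 := by rw [← mul_assoc, hαc₂]
      linarith
    -- Gronwall via antitonicity of g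
    set g : ℝ → ℝ := fun s => V s * Real.exp (α * s) with hgdef
    have hgderiv : ∀ s : ℝ, 0 ≤ s →
        HasDerivAt g (dV s * Real.exp (α * s) + V s * (Real.exp (α * s) * α)) s := by
      intro s hs
      have hexp : HasDerivAt (fun u : ℝ => Real.exp (α * u)) (Real.exp (α * s) * α) s := by
        have h1 : HasDerivAt (fun u : ℝ => α * u) α s := by
          simpa using (hasDerivAt_id s).const_mul α
        simpa using h1.exp
      exact (hderiv s hs).mul hexp
    have hmono : AntitoneOn g (Set.Ici (0:ℝ)) := by
      apply antitoneOn_of_deriv_nonpos (convex_Ici 0)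
      · intro s hs
        exact ((hgderiv s hs).continuousAt).continuousWithinAt
      · intro s hs
        rw [interior_Ici] at hs
        exact (hgderiv s (le_of_lt hs)).differentiableAt.differentiableWithinAt
      · intro s hs
        rw [interior_Ici] at hs
        rw [(hgderiv s hs.le).deriv]
        have hb := hbound s hs.le
        have he := Real.exp_pos (α * s)
        nlinarith
    have hgle : g t ≤ g 0 := hmono Set.self_mem_Ici (Set.mem_Ici.mpr ht) ht
    have hg0 : g 0 = x 0 ⬝ᵥ P.mulVec (x 0) := by
      simp [hgdef, hVdef]
    rw [hg0] at hgle
    have hVt : V t * Real.exp (α * t) ≤ x 0 ⬝ᵥ P.mulVec (x 0) := hgle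
    have hexp_pos : 0 < Real.exp (α * t) := Real.exp_pos _
    have : V t ≤ (x 0 ⬝ᵥ P.mulVec (x 0)) * Real.exp (-(α * t)) := by
      rw [Real.exp_neg, ← div_eq_mul_inv, le_div_iff₀ hexp_pos]
      exact hVt
    exact this
  constructor
  · -- Lyapunov stability
    intro ε₀ hε₀
    refine ⟨ε₀ * Real.sqrt (c₁ / c₂), by positivity, ?_⟩
    intro x hsol hx0 t ht
    have hS0nn : (0:ℝ) ≤ ∑ k, x 0 k ^ 2 := Finset.sum_nonneg fun k _ => sq_nonneg _
    have hStnn : (0:ℝ) ≤ ∑ k, x t k ^ 2 := Finset.sum_nonneg fun k _ => sq_nonneg _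
    rw [enorm'_eq] at hx0 ⊢
    have hδpos : (0:ℝ) < ε₀ * Real.sqrt (c₁ / c₂) := by positivity
    have hS0 : ∑ k, x 0 k ^ 2 < ε₀ ^ 2 * (c₁ / c₂) := by
      have := (Real.sqrt_lt' hδpos).mp hx0
      calc ∑ k, x 0 k ^ 2 < (ε₀ * Real.sqrt (c₁ / c₂)) ^ 2 := this
      _ = ε₀ ^ 2 * (c₁ / c₂) := by
          rw [mul_pow, Real.sq_sqrt (by positivity : (0:ℝ) ≤ c₁ / c₂)]
    rw [Real.sqrt_lt' hε₀]
    -- chain of inequalities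
    have h1 : c₁ * ∑ k, x t k ^ 2 ≤ x t ⬝ᵥ P.mulVec (x t) := hPlow (x t)
    have h2 := key x hsol t ht
    have hV0nn : 0 ≤ x 0 ⬝ᵥ P.mulVec (x 0) := by
      have := hPlow (x 0); nlinarith
    have h3 : (x 0 ⬝ᵥ P.mulVec (x 0)) * Real.exp (-(α * t)) ≤ x 0 ⬝ᵥ P.mulVec (x 0) := by
      have hle1 : Real.exp (-(α * t)) ≤ 1 := by
        rw [Real.exp_le_one_iff]
        nlinarith
      nlinarith
    have h4 : x 0 ⬝ᵥ P.mulVec (x 0) ≤ c₂ * ∑ k, x 0 k ^ 2 := hPup (x 0)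
    have h5 : c₂ * ∑ k, x 0 k ^ 2 < c₂ * (ε₀ ^ 2 * (c₁ / c₂)) :=
      mul_lt_mul_of_pos_left hS0 hc₂
    have h6 : c₂ * (ε₀ ^ 2 * (c₁ / c₂)) = c₁ * ε₀ ^ 2 := by
      field_simp
    nlinarith
  · -- attractivity
    intro x hsol
    rw [tendsto_pi_nhds]
    intro i
    set V0 : ℝ := x 0 ⬝ᵥ P.mulVec (x 0) with hV0def
    have hS0nn : (0:ℝ) ≤ ∑ k, x 0 k ^ 2 := Finset.sum_nonneg fun k _ => sq_nonneg _
    have hV0nn : 0 ≤ V0 := le_trans (mul_nonneg hc₁.le hS0nn) (hPlow (x 0))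
    set b : ℝ → ℝ := fun t => Real.sqrt (V0 / c₁ * Real.exp (-(α * t))) with hbdef
    have hb : ∀ t : ℝ, 0 ≤ t → |x t i| ≤ b t := by
      intro t ht
      have h1 : x t i ^ 2 ≤ ∑ k, x t k ^ 2 :=
        Finset.single_le_sum (fun k _ => sq_nonneg (x t k)) (Finset.mem_univ i)
      have h2 : c₁ * ∑ k, x t k ^ 2 ≤ x t ⬝ᵥ P.mulVec (x t) := hPlow (x t)
      have h3 := key x hsol t ht
      have h1' : c₁ * x t i ^ 2 ≤ c₁ * ∑ k, x t k ^ 2 :=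
        mul_le_mul_of_nonneg_left h1 hc₁.le
      have h4 : x t i ^ 2 ≤ V0 / c₁ * Real.exp (-(α * t)) := by
        rw [div_mul_eq_mul_div, le_div_iff₀ hc₁]
        linarith
      calc |x t i| = Real.sqrt (x t i ^ 2) := (Real.sqrt_sq_eq_abs _).symm
      _ ≤ b t := Real.sqrt_le_sqrt h4
    have hblim : Tendsto b atTop (nhds 0) := by
      have h1 : Tendsto (fun t : ℝ => α * t) atTop atTop :=
        Tendsto.const_mul_atTop hα tendsto_id
      have h2 : Tendsto (fun t : ℝ => Real.exp (-(α * t))) atTop (nhds 0) := by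
        have := Real.tendsto_exp_atBot
        exact this.comp (tendsto_neg_atBot_iff.mpr h1)
      have h3 : Tendsto (fun t : ℝ => V0 / c₁ * Real.exp (-(α * t))) atTop (nhds 0) := by
        simpa using h2.const_mul (V0 / c₁)
      have h4 := h3.sqrt
      simpa [Real.sqrt_zero] using h4
    have hneg : Tendsto (fun t => -b t) atTop (nhds 0) := by
      simpa using hblim.neg
    have : Tendsto (fun t => x t i) atTop (nhds 0) := by
      refine tendsto_of_tendsto_of_tendsto_of_le_of_le' hneg hblim ?_ ?_
      · filter_upwards [eventually_ge_atTop (0:ℝ)] with t ht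
        exact neg_le_of_abs_le (hb t ht)
      · filter_upwards [eventually_ge_atTop (0:ℝ)] with t ht
        exact le_of_abs_le (hb t ht)
    simpa using this
end

section
/- Let A ∈ ℝ^{n×n}, B ∈ ℝ^{n×m}, C ∈ ℝ^{m×n}, D ∈ ℝ^{m×m} with ‖D‖ < 1, and let N_1 ≤ N_2 be positive integers. If the N_2-th order LMI relaxation is feasible, i.e. there exist ℋ_0, …, ℋ_{2(N_2−1)} ∈ S^{n+m} such that the N_2×N_2 block Hankel matrix with (i,j) block ℋ_{i+j−2} is positive semidefinite and nonzero, each ℋ_i is positive semidefinite, [A B] ℋ_i = [I_n 0] ℋ_{i+1} for i = 0,…,2N_2−3, [A B] ℋ_{2(N_2−1)} [I_n 0]^T + ([A B] ℋ_{2(N_2−1)} [I_n 0]^T)^T is positive semidefinite, the matrix [[-C, I_m − D],[0, I_m]] ℋ_i [[-C, I_m − D],[0, I_m]]^T has all entries nonnegative for each i, and every diagonal entry of [−C, I_m − D] ℋ_i [0, I_m]^T is zero for each i, then the N_1-th order LMI relaxation (the same set of conditions with N_2 replaced by N_1) is also feasible. -/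
open Matrix

/-- The `N×N` block Hankel matrix whose `(i,j)` block is `H (i+j)`. -/
def hankelBlock {n m : ℕ} (H : ℕ → Matrix (Fin n ⊕ Fin m) (Fin n ⊕ Fin m) ℝ) (N : ℕ) :
    Matrix (Fin N × (Fin n ⊕ Fin m)) (Fin N × (Fin n ⊕ Fin m)) ℝ :=
  fun p q => H ((p.1 : ℕ) + (q.1 : ℕ)) p.2 q.2

/-- Feasibility of the `N`-th order LMI relaxation. -/
def NthOrderRelaxationFeasible {n m : ℕ}
    (A : Matrix (Fin n) (Fin n) ℝ) (B : Matrix (Fin n) (Fin m) ℝ)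
    (C : Matrix (Fin m) (Fin n) ℝ) (D : Matrix (Fin m) (Fin m) ℝ) (N : ℕ) : Prop :=
  ∃ H : ℕ → Matrix (Fin n ⊕ Fin m) (Fin n ⊕ Fin m) ℝ,
    (hankelBlock H N).PosSemidef ∧
    hankelBlock H N ≠ 0 ∧
    (∀ i, i + 2 ≤ 2 * N → (H i).PosSemidef) ∧
    (∀ i, i + 3 ≤ 2 * N →
      fromCols A B * H i = fromCols (1 : Matrix (Fin n) (Fin n) ℝ) 0 * H (i + 1)) ∧
    (fromCols A B * H (2 * (N - 1)) * (fromCols (1 : Matrix (Fin n) (Fin n) ℝ) 0)ᵀ +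
      (fromCols A B * H (2 * (N - 1)) *
        (fromCols (1 : Matrix (Fin n) (Fin n) ℝ) 0)ᵀ)ᵀ).PosSemidef ∧
    (∀ i, i + 2 ≤ 2 * N → ∀ a b,
      0 ≤ (fromBlocks (-C) (1 - D) 0 (1 : Matrix (Fin m) (Fin m) ℝ) * H i *
        (fromBlocks (-C) (1 - D) 0 (1 : Matrix (Fin m) (Fin m) ℝ))ᵀ) a b) ∧
    (∀ i, i + 2 ≤ 2 * N → ∀ j : Fin m,
      (fromCols (-C) (1 - D) * H i *
        (fromCols (0 : Matrix (Fin m) (Fin n) ℝ) 1)ᵀ : Matrix (Fin m) (Fin m) ℝ) j j = 0)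

/-- A nonzero real positive semidefinite matrix has a nonzero diagonal entry. -/
lemma posSemidef_exists_diag_ne {ι : Type*} [Fintype ι] [DecidableEq ι]
    {M : Matrix ι ι ℝ} (hM : M.PosSemidef) (hne : M ≠ 0) : ∃ i, M i i ≠ 0 := by
  by_contra h
  push_neg at h
  apply hne
  obtain ⟨B, rfl⟩ := by
    open scoped MatrixOrder in exact CStarAlgebra.nonneg_iff_eq_star_mul_self.mp hM.nonneg
  have hB : B = 0 := by
    ext k i
    have hi := h i
    rw [Matrix.mul_apply] at hi
    have hsum : ∑ x, B x i * B x i = 0 := by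
      simpa [Matrix.conjTranspose_apply, Matrix.star_apply] using hi
    have := (Finset.sum_eq_zero_iff_of_nonneg
      (fun x _ => mul_self_nonneg (B x i))).mp hsum k (Finset.mem_univ k)
    simpa using mul_self_eq_zero.mp this
  simp [hB]

/-- If the `N₂`-th order LMI relaxation is feasible and `1 ≤ N₁ ≤ N₂`, then the `N₁`-th
order LMI relaxation is also feasible. -/
theorem relaxation_feasibility_antitone {n m : ℕ}
    (A : Matrix (Fin n) (Fin n) ℝ) (B : Matrix (Fin n) (Fin m) ℝ)
    (C : Matrix (Fin m) (Fin n) ℝ) (D : Matrix (Fin m) (Fin m) ℝ)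
    (hD : opNorm D < 1)
    (N₁ N₂ : ℕ) (hN₁ : 1 ≤ N₁) (hle : N₁ ≤ N₂)
    (hfeas : NthOrderRelaxationFeasible A B C D N₂) :
    NthOrderRelaxationFeasible A B C D N₁ := by
  obtain ⟨H, h1, h2, h3, h4, h5, h6, h7⟩ := hfeas
  obtain ⟨⟨i0, a0⟩, hp⟩ := posSemidef_exists_diag_ne h1 h2
  set t : ℕ := N₂ - N₁ with ht
  set s : ℕ := min t (i0 : ℕ) with hs
  have hst : s ≤ t := min_le_left _ _
  have hsi : s ≤ (i0 : ℕ) := min_le_right _ _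
  have hi0 : (i0 : ℕ) ≤ N₂ - 1 := by omega
  refine ⟨fun k => H (k + 2 * s), ?_, ?_, ?_, ?_, ?_, ?_, ?_⟩
  · -- PSD: principal submatrix of the big Hankel matrix
    have hEq : hankelBlock (fun k => H (k + 2 * s)) N₁ =
        (hankelBlock H N₂).submatrix
          (fun p : Fin N₁ × (Fin n ⊕ Fin m) => (⟨(p.1 : ℕ) + s, by omega⟩, p.2))
          (fun p : Fin N₁ × (Fin n ⊕ Fin m) => (⟨(p.1 : ℕ) + s, by omega⟩, p.2)) := by
      ext p q
      simp only [hankelBlock, Matrix.submatrix_apply]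
      congr 1
      omega
    rw [hEq]
    exact h1.submatrix _
  · -- nonzero
    intro h0
    apply hp
    have hlt : (i0 : ℕ) - s < N₁ := by omega
    have := congrFun (congrFun h0 (⟨(i0 : ℕ) - s, hlt⟩, a0)) (⟨(i0 : ℕ) - s, hlt⟩, a0)
    simp only [hankelBlock, Matrix.zero_apply] at this ⊢
    rw [show (i0 : ℕ) - s + ((i0 : ℕ) - s) + 2 * s = (i0 : ℕ) + (i0 : ℕ) by omega] at this
    exact this
  · intro i hi
    exact h3 (i + 2 * s) (by omega)
  · intro i hi
    have := h4 (i + 2 * s) (by omega)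
    rwa [show i + 2 * s + 1 = i + 1 + 2 * s by omega] at this
  · -- the trailing condition
    by_cases hc : t ≤ (i0 : ℕ)
    · have hseq : 2 * (N₁ - 1) + 2 * s = 2 * (N₂ - 1) := by
        simp only [hs, min_eq_left hc]
        omega
      show (fromCols A B * H (2 * (N₁ - 1) + 2 * s) * (fromCols 1 0)ᵀ +
        (fromCols A B * H (2 * (N₁ - 1) + 2 * s) * (fromCols 1 0)ᵀ)ᵀ).PosSemidef
      rw [hseq]
      exact h5
    · -- s = i0 < t, derive from the shift condition and PSD
      set j : ℕ := 2 * (N₁ - 1) + 2 * s with hj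
      have hslt : s < t := by omega
      have hj3 : j + 3 ≤ 2 * N₂ := by omega
      have e4 := h4 j hj3
      have hP : (H (j + 1)).PosSemidef := h3 (j + 1) (by omega)
      set E : Matrix (Fin n) (Fin n ⊕ Fin m) ℝ := fromCols 1 0 with hE
      have hM : (fromCols A B * H j * Eᵀ) = E * H (j + 1) * Eᵀ := by
        rw [e4]; rfl
      have hPSD : (E * H (j + 1) * Eᵀ).PosSemidef := by
        have := hP.mul_mul_conjTranspose_same E
        simpa [Matrix.conjTranspose_eq_transpose_of_trivial] using this
      have hHt : (H (j + 1))ᵀ = H (j + 1) := by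
        have := hP.isHermitian
        rwa [Matrix.IsHermitian, Matrix.conjTranspose_eq_transpose_of_trivial] at this
      have hsym : (E * H (j + 1) * Eᵀ)ᵀ = E * H (j + 1) * Eᵀ := by
        rw [Matrix.transpose_mul, Matrix.transpose_mul, Matrix.transpose_transpose, hHt,
          Matrix.mul_assoc]
      show (fromCols A B * H j * Eᵀ + (fromCols A B * H j * Eᵀ)ᵀ).PosSemidef
      rw [hM, hsym]
      exact hPSD.add hPSD
  · intro i hi a b
    exact h6 (i + 2 * s) (by omega) a b
  · intro i hi jj
    exact h7 (i + 2 * s) (by omega) jj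
end
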